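/- arXiv:2511.15673 — 3 statements merged into one kernel-verified Lean document; each statement's English description precedes it below -/
import Mathlib

section
/- Let t₁ ≥ t₂ ≥ 1 be integers. Then there exists a tree T with bipartition class sizes t₁ and t₂ and maximum degree Δ(T) ≤ ⌈(t₁+t₂+1)/t₂⌉ ≤ t₁/t₂ + 2. -/
open SimpleGraph

/-- `G` has a bipartition of its vertex set into two independent classes, of sizes `a` and `b`. -/
def HasBipartition {V : Type*} (G : SimpleGraph V) (a b : ℕ) : Prop :=
  ∃ A : Set V, (∀ ⦃u v : V⦄, G.Adj u v → (u ∈ A ↔ v ∉ A)) ∧ A.ncard = a ∧ Aᶜ.ncard = b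

/-- The maximum degree of `G` is at most `d`. -/
def MaxDegLE {V : Type*} (G : SimpleGraph V) (d : ℝ) : Prop :=
  ∀ v : V, ((G.neighborSet v).ncard : ℝ) ≤ d

/-- A graph whose edges all come from a "parent" function admitting a decreasing measure is
acyclic. -/
lemma acyclic_of_parent {V : Type*} [DecidableEq V] {G : SimpleGraph V} (f : V → V) (m : V → ℕ)
    (hadj : ∀ u v : V, G.Adj u v → f u = v ∨ f v = u)
    (hdec : ∀ v : V, f v ≠ v → m (f v) < m v) : G.IsAcyclic := by
  intro v c hc
  have hsupnn : c.support ≠ [] := by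
    intro h
    have := c.start_mem_support
    rw [h] at this
    exact List.not_mem_nil this
  obtain ⟨u, hu, hmax⟩ := Finset.exists_max_image c.support.toFinset m
    ⟨v, by simp [List.mem_toFinset]⟩
  rw [List.mem_toFinset] at hu
  have hmax' : ∀ w ∈ c.support, m w ≤ m u := by
    intro w hw; exact hmax w (List.mem_toFinset.mpr hw)
  have hc' := hc.rotate hu
  have hsub : ∀ w, w ∈ (c.rotate u hu).support → w ∈ c.support := by
    intro w hw
    rw [(c.rotate u hu).support_eq_cons] at hw
    rcases List.mem_cons.mp hw with h | h
    · subst h; exact hu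
    · have hperm := SimpleGraph.Walk.support_rotate c u hu
      have := (hperm.perm.mem_iff).mp h
      rw [c.support_eq_cons]
      exact List.mem_cons_of_mem _ this
  -- now work with the rotated cycle
  revert hc' hsub
  generalize c.rotate u hu = c'
  intro hc' hsub
  -- maximality transferred
  have hmax'' : ∀ w ∈ c'.support, m w ≤ m u := fun w hw => hmax' w (hsub w hw)
  clear hmax hmax' hsub hu hc hsupnn
  cases c' with
  | nil => exact SimpleGraph.Walk.IsCycle.not_of_nil hc'
  | @cons _ x _ h p =>
    have hxu : u ≠ x := h.ne
    -- first edge gives f u = x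
    have hfu_x : f u = x := by
      rcases hadj u x h with h' | h'
      · exact h'
      · exfalso
        have hx : x ∈ (Walk.cons h p).support := by
          rw [Walk.support_cons]
          exact List.mem_cons_of_mem _ p.start_mem_support
        have : m u < m x := by
          have := hdec x (by rw [h']; exact h.ne)
          rwa [h'] at this
        exact absurd (hmax'' x hx) (by omega)
    -- last edge gives f u = y
    obtain ⟨y, hy, q, hq⟩ := SimpleGraph.Walk.exists_eq_cons_of_ne hxu p.reverse
    have hfu_y : f u = y := by
      rcases hadj u y hy with h' | h'
      · exact h'
      · exfalso
        have hyu : y ≠ u := fun hh => hy.ne (hh.symm)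
        have hysup : y ∈ (Walk.cons h p).support := by
          rw [Walk.support_cons]
          apply List.mem_cons_of_mem
          have : y ∈ p.reverse.support := by
            rw [hq, Walk.support_cons]
            exact List.mem_cons_of_mem _ q.start_mem_support
          rwa [Walk.support_reverse, List.mem_reverse] at this
        have : m u < m y := by
          have := hdec y (by rw [h']; exact hy.ne)
          rwa [h'] at this
        exact absurd (hmax'' y hysup) (by omega)
    -- so x = y, and the edge s(u,x) appears twice
    have hxy : x = y := hfu_x ▸ hfu_y
    have hedge : s(u, x) ∈ p.edges := by
      have : s(u, y) ∈ p.reverse.edges := by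
        rw [hq, Walk.edges_cons]
        exact List.mem_cons_self
      rw [Walk.edges_reverse, List.mem_reverse] at this
      have hxyE : s(u, x) = s(u, y) := by rw [hxy]
      rw [hxyE]
      exact this
    have htrail := hc'.isTrail.edges_nodup
    rw [Walk.edges_cons] at htrail
    exact (List.nodup_cons.mp htrail).1 hedge

lemma connected_of_parent {V : Type*} [Fintype V] {G : SimpleGraph V} (f : V → V) (m : V → ℕ)
    (root : V) (hfix : ∀ v : V, f v = v → v = root)
    (hadj : ∀ v : V, f v ≠ v → G.Adj v (f v))
    (hdec : ∀ v : V, f v ≠ v → m (f v) < m v) : G.Connected := by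
  have hreach : ∀ (k : ℕ) (v : V), m v ≤ k → G.Reachable v root := by
    intro k
    induction k with
    | zero =>
      intro v hv
      by_cases hfv : f v = v
      · exact (hfix v hfv) ▸ Reachable.refl v
      · exact absurd (hdec v hfv) (by omega)
    | succ n ih =>
      intro v hv
      by_cases hfv : f v = v
      · exact (hfix v hfv) ▸ Reachable.refl v
      · exact ((hadj v hfv).reachable).trans (ih (f v) (by have := hdec v hfv; omega))
  haveI : Nonempty V := ⟨root⟩
  exact SimpleGraph.Connected.mk
    (fun u v => (hreach (m u) u le_rfl).trans (hreach (m v) v le_rfl).symm)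

/-- The parent function of the caterpillar tree, on vertex labels. Labels `< t₂` are the
`B`-class (spine) vertices; labels in `[t₂, 2t₂-1)` are the spine `A`-vertices; the remaining
labels are `A`-leaves distributed in blocks of size `t₁ / t₂` among the `B`-vertices. -/
def fval (t₁ t₂ : ℕ) (m : ℕ) : ℕ :=
  if m < t₂ then (if m = 0 then 0 else t₂ + (m - 1))
  else if m < 2 * t₂ - 1 then m - t₂
  else (m - (2 * t₂ - 1)) / (t₁ / t₂)

/-- A measure (depth) decreasing along `fval`. -/
def dval (t₁ t₂ : ℕ) (m : ℕ) : ℕ :=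
  if m < t₂ then 2 * m
  else if m < 2 * t₂ - 1 then 2 * (m - t₂) + 1
  else 2 * ((m - (2 * t₂ - 1)) / (t₁ / t₂)) + 1

section Facts

variable {t₁ t₂ : ℕ}

lemma q_pos (ht₂ : 1 ≤ t₂) (ht : t₂ ≤ t₁) : 0 < t₁ / t₂ := Nat.div_pos ht ht₂

lemma q_mul (ht₂ : 1 ≤ t₂) (ht : t₂ ≤ t₁) : t₁ - t₂ < (t₁ / t₂) * t₂ := by
  have h1 := Nat.div_add_mod t₁ t₂
  have h2 : t₁ % t₂ < t₂ := Nat.mod_lt _ ht₂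
  have h3 : (t₁ / t₂) * t₂ = t₂ * (t₁ / t₂) := Nat.mul_comm _ _
  omega

lemma leaf_div_lt (ht₂ : 1 ≤ t₂) (ht : t₂ ≤ t₁) {m : ℕ} (hm : m < t₁ + t₂) (h1 : ¬ m < t₂) (h2 : ¬ m < 2 * t₂ - 1) :
    (m - (2 * t₂ - 1)) / (t₁ / t₂) < t₂ := by
  have hq := q_pos ht₂ ht
  have hqm := q_mul ht₂ ht
  rw [Nat.div_lt_iff_lt_mul hq]
  have : m - (2 * t₂ - 1) ≤ t₁ - t₂ := by omega
  calc m - (2 * t₂ - 1) ≤ t₁ - t₂ := this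
    _ < (t₁ / t₂) * t₂ := hqm
    _ = t₂ * (t₁ / t₂) := Nat.mul_comm _ _

lemma fval_lt (ht₂ : 1 ≤ t₂) (ht : t₂ ≤ t₁) {m : ℕ} (hm : m < t₁ + t₂) : fval t₁ t₂ m < t₁ + t₂ := by
  unfold fval
  split_ifs with h1 h2 h3
  · omega
  · omega
  · omega
  · have := leaf_div_lt ht₂ ht hm h1 h3
    omega

lemma fval_fix (ht₂ : 1 ≤ t₂) (ht : t₂ ≤ t₁) {m : ℕ} (hm : m < t₁ + t₂) (h : fval t₁ t₂ m = m) : m = 0 := by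
  unfold fval at h
  split_ifs at h with h1 h2 h3
  · exact h2
  · omega
  · omega
  · have := leaf_div_lt ht₂ ht hm h1 h3
    omega

lemma dval_fval_lt (ht₂ : 1 ≤ t₂) (ht : t₂ ≤ t₁) {m : ℕ} (h0 : 0 < m) (hm : m < t₁ + t₂) :
    dval t₁ t₂ (fval t₁ t₂ m) < dval t₁ t₂ m := by
  have hq := q_pos ht₂ ht
  unfold fval dval
  split_ifs with h1 h2 h3 h4 h5 h6 h7 h8 h9
  all_goals first
    | omega
    | (exfalso; omega)
    | skip
  -- remaining cases need div facts
  all_goals {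
    have hdlt := leaf_div_lt ht₂ ht hm (by omega) (by omega)
    omega
  }

lemma fval_cross (ht₂ : 1 ≤ t₂) (ht : t₂ ≤ t₁) {m : ℕ} (h0 : 0 < m) (hm : m < t₁ + t₂) :
    m < t₂ ↔ t₂ ≤ fval t₁ t₂ m := by
  unfold fval
  split_ifs with h1 h2 h3
  · omega
  · omega
  · omega
  · have := leaf_div_lt ht₂ ht hm h1 h3
    omega

end Facts

/-- The caterpillar graph. -/
def catG (t₁ t₂ : ℕ) : SimpleGraph (Fin (t₁ + t₂)) where
  Adj u v := u ≠ v ∧ (fval t₁ t₂ u.val = v.val ∨ fval t₁ t₂ v.val = u.val)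
  symm := by
    refine ⟨?_⟩
    intro u v ⟨h1, h2⟩
    exact ⟨h1.symm, h2.symm⟩
  loopless := by
    refine ⟨?_⟩
    intro v ⟨h1, _⟩
    exact h1 rfl

instance catG_decAdj (t₁ t₂ : ℕ) : DecidableRel (catG t₁ t₂).Adj := fun u v =>
  inferInstanceAs (Decidable (u ≠ v ∧ (fval t₁ t₂ u.val = v.val ∨ fval t₁ t₂ v.val = u.val)))

lemma card_filter_val {n : ℕ} (p : ℕ → Prop) [DecidablePred p] :
    (Finset.univ.filter fun v : Fin n => p v.val).card = ((Finset.range n).filter p).card := by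
  apply Finset.card_bij (fun v _ => v.val)
  · intro a ha
    simp only [Finset.mem_filter, Finset.mem_range, Finset.mem_univ, true_and] at ha ⊢
    exact ⟨a.isLt, ha⟩
  · intro a _ b _ hab
    exact Fin.ext hab
  · intro b hb
    simp only [Finset.mem_filter, Finset.mem_range] at hb
    exact ⟨⟨b, hb.1⟩, by simp [hb.2], rfl⟩

theorem exists_tree_small_max_degree (t₁ t₂ : ℕ) (ht₂ : 1 ≤ t₂) (ht : t₂ ≤ t₁) :
    ∃ T : SimpleGraph (Fin (t₁ + t₂)), T.IsTree ∧ HasBipartition T t₁ t₂ ∧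
      MaxDegLE T ((⌈((t₁ : ℝ) + (t₂ : ℝ) + 1) / (t₂ : ℝ)⌉ : ℤ) : ℝ) ∧
      ((⌈((t₁ : ℝ) + (t₂ : ℝ) + 1) / (t₂ : ℝ)⌉ : ℤ) : ℝ) ≤ (t₁ : ℝ) / (t₂ : ℝ) + 2 := by
  set n := t₁ + t₂ with hn
  have hnpos : 0 < n := by omega
  set q : ℕ := t₁ / t₂ with hqdef
  have hq : 0 < q := q_pos ht₂ ht
  -- the parent function as a map on Fin n
  set f : Fin n → Fin n := fun v => ⟨fval t₁ t₂ v.val, fval_lt ht₂ ht v.isLt⟩ with hf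
  set root : Fin n := ⟨0, hnpos⟩ with hroot
  have hf0 : f root = root := by
    apply Fin.ext
    simp only [hf, hroot, fval]
    simp [ht₂]
  have hceil : (⌈((t₁ : ℝ) + (t₂ : ℝ) + 1) / (t₂ : ℝ)⌉ : ℤ) = (q : ℤ) + 2 := by
    have ht₂R : (0 : ℝ) < (t₂ : ℝ) := by positivity
    rw [Int.ceil_eq_iff]
    have hmod := Nat.div_add_mod t₁ t₂
    have hmodlt : t₁ % t₂ < t₂ := Nat.mod_lt _ ht₂
    constructor
    · push_cast
      rw [lt_div_iff₀ ht₂R]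
      push_cast
      have h1 : (q : ℝ) * t₂ ≤ t₁ := by
        have : q * t₂ ≤ t₁ := by rw [hqdef]; exact Nat.div_mul_le_self t₁ t₂
        exact_mod_cast this
      nlinarith
    · push_cast
      rw [div_le_iff₀ ht₂R]
      have h1 : (t₁ : ℝ) + 1 ≤ (q : ℝ) * t₂ + t₂ := by
        have : t₁ + 1 ≤ q * t₂ + t₂ := by
          rw [hqdef, Nat.mul_comm]
          omega
        exact_mod_cast this
      nlinarith
  refine ⟨catG t₁ t₂, ?_, ?_, ?_, ?_⟩
  · -- IsTree
    constructor
    · -- connected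
      apply connected_of_parent f (fun v => dval t₁ t₂ v.val) root
      · intro v hv
        apply Fin.ext
        have : fval t₁ t₂ v.val = v.val := congrArg Fin.val hv
        simp [hroot, fval_fix ht₂ ht v.isLt this]
      · intro v hv
        have hvv : fval t₁ t₂ v.val ≠ v.val := fun h => hv (Fin.ext h)
        exact ⟨fun h => hv h.symm, Or.inl rfl⟩
      · intro v hv
        have hvv : fval t₁ t₂ v.val ≠ v.val := fun h => hv (Fin.ext h)
        have hv0 : 0 < v.val := by
          rcases Nat.eq_zero_or_pos v.val with h | h
          · exfalso
            apply hvv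
            unfold fval
            simp [h, ht₂]
          · exact h
        exact dval_fval_lt ht₂ ht hv0 v.isLt
    · -- acyclic
      apply acyclic_of_parent f (fun v => dval t₁ t₂ v.val)
      · intro u v huv
        rcases huv.2 with h | h
        · exact Or.inl (Fin.ext h)
        · exact Or.inr (Fin.ext h)
      · intro v hv
        have hvv : fval t₁ t₂ v.val ≠ v.val := fun h => hv (Fin.ext h)
        have hv0 : 0 < v.val := by
          rcases Nat.eq_zero_or_pos v.val with h | h
          · exfalso
            apply hvv
            unfold fval
            simp [h, ht₂]
          · exact h
        exact dval_fval_lt ht₂ ht hv0 v.isLt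
  · -- bipartition
    refine ⟨{v : Fin n | t₂ ≤ v.val}, ?_, ?_, ?_⟩
    · intro u v huv
      simp only [Set.mem_setOf_eq]
      rcases huv.2 with h | h
      · have hu0 : 0 < u.val := by
          rcases Nat.eq_zero_or_pos u.val with h0 | h0
          · exfalso
            apply huv.1
            apply Fin.ext
            have : fval t₁ t₂ u.val = u.val := by
              unfold fval; simp [h0, ht₂]
            omega
          · exact h0
        have := fval_cross ht₂ ht hu0 u.isLt
        rw [h] at this
        constructor
        · intro h1 h2; omega
        · intro h1; by_contra h2; push_neg at h1 h2; omega
      · have hv0 : 0 < v.val := by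
          rcases Nat.eq_zero_or_pos v.val with h0 | h0
          · exfalso
            apply huv.1
            apply Fin.ext
            have : fval t₁ t₂ v.val = v.val := by
              unfold fval; simp [h0, ht₂]
            omega
          · exact h0
        have := fval_cross ht₂ ht hv0 v.isLt
        rw [h] at this
        constructor
        · intro h1 h2; omega
        · intro h1; by_contra h2; push_neg at h1 h2; omega
    · rw [Set.ncard_eq_toFinset_card']
      rw [Set.toFinset_setOf]
      rw [card_filter_val (fun m => t₂ ≤ m)]
      have : (Finset.range n).filter (fun m => t₂ ≤ m) = Finset.Ico t₂ n := by
        ext m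
        simp only [Finset.mem_filter, Finset.mem_range, Finset.mem_Ico]
        omega
      rw [this, Nat.card_Ico]
      omega
    · have hcompl : {v : Fin n | t₂ ≤ v.val}ᶜ = {v : Fin n | v.val < t₂} := by
        ext v
        simp [not_le]
      rw [hcompl, Set.ncard_eq_toFinset_card', Set.toFinset_setOf,
        card_filter_val (fun m => m < t₂)]
      have : (Finset.range n).filter (fun m => m < t₂) = Finset.range t₂ := by
        ext m
        simp only [Finset.mem_filter, Finset.mem_range]
        omega
      rw [this, Finset.card_range]
  · -- MaxDegLE
    intro v
    rw [hceil]
    push_cast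
    have hcard : ((catG t₁ t₂).neighborSet v).ncard ≤ q + 2 := by
      rw [Set.ncard_eq_toFinset_card']
      have hsub : ((catG t₁ t₂).neighborSet v).toFinset ⊆
          insert (f v) (Finset.univ.filter fun u : Fin n =>
            fval t₁ t₂ u.val = v.val ∧ u.val ≠ v.val) := by
        intro u hu
        rw [Set.mem_toFinset, SimpleGraph.mem_neighborSet] at hu
        rcases hu.2 with h | h
        · apply Finset.mem_insert.mpr
          left
          exact Fin.ext h.symm
        · apply Finset.mem_insert.mpr
          right
          simp only [Finset.mem_filter, Finset.mem_univ, true_and]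
          exact ⟨h, fun hh => hu.1 (Fin.ext hh).symm⟩
      have h1 := Finset.card_le_card hsub
      have h2 := Finset.card_insert_le (f v)
        (Finset.univ.filter fun u : Fin n =>
          fval t₁ t₂ u.val = v.val ∧ u.val ≠ v.val)
      have h3 : (Finset.univ.filter fun u : Fin n =>
          fval t₁ t₂ u.val = v.val ∧ u.val ≠ v.val).card ≤ q + 1 := by
        rw [card_filter_val (fun m => fval t₁ t₂ m = v.val ∧ m ≠ v.val)]
        by_cases hv : v.val < t₂
        · -- B vertex: spine child + at most q leaves
          have hsub2 : (Finset.range n).filter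
              (fun m => fval t₁ t₂ m = v.val ∧ m ≠ v.val) ⊆
              insert (t₂ + v.val)
                (Finset.Ico (2 * t₂ - 1 + v.val * q) (2 * t₂ - 1 + (v.val + 1) * q)) := by
            intro m hm
            simp only [Finset.mem_filter, Finset.mem_range] at hm
            obtain ⟨hmn, hfm, hmv⟩ := hm
            rw [Finset.mem_insert, Finset.mem_Ico]
            unfold fval at hfm
            split_ifs at hfm with h1' h2' h3'
            · omega
            · omega
            · left; omega
            · right
              have hdm := Nat.div_add_mod (m - (2 * t₂ - 1)) q
              have hmod : (m - (2 * t₂ - 1)) % q < q := Nat.mod_lt _ hq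
              have he : (v.val + 1) * q = v.val * q + q := by ring
              have hcm : q * v.val = v.val * q := Nat.mul_comm _ _
              rw [hfm] at hdm
              omega
          have hc1 := Finset.card_le_card hsub2
          have hc2 := Finset.card_insert_le (t₂ + v.val)
            (Finset.Ico (2 * t₂ - 1 + v.val * q) (2 * t₂ - 1 + (v.val + 1) * q))
          have hc3 : (Finset.Ico (2 * t₂ - 1 + v.val * q)
              (2 * t₂ - 1 + (v.val + 1) * q)).card = q := by
            rw [Nat.card_Ico]
            have he : (v.val + 1) * q = v.val * q + q := by ring
            omega
          omega
        · -- A vertex: at most one child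
          have hsub2 : (Finset.range n).filter
              (fun m => fval t₁ t₂ m = v.val ∧ m ≠ v.val) ⊆ {v.val - t₂ + 1} := by
            intro m hm
            simp only [Finset.mem_filter, Finset.mem_range] at hm
            obtain ⟨hmn, hfm, hmv⟩ := hm
            rw [Finset.mem_singleton]
            unfold fval at hfm
            split_ifs at hfm with h1' h2' h3'
            · omega
            · omega
            · omega
            · have := leaf_div_lt ht₂ ht hmn h1' h3'
              omega
          have := Finset.card_le_card hsub2
          simp only [Finset.card_singleton] at this
          omega
      omega
    exact_mod_cast hcard
  · -- final inequality
    rw [hceil]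
    push_cast
    have hle : (q : ℝ) ≤ (t₁ : ℝ) / (t₂ : ℝ) := by
      rw [le_div_iff₀ (by positivity)]
      have : q * t₂ ≤ t₁ := Nat.div_mul_le_self t₁ t₂
      exact_mod_cast this
    linarith
end

section
/- For every ξ ∈ (0, 1/100] there exists μ₀ > 0 such that for every μ ∈ (0, μ₀] there exists n₀ such that the following holds for all n ≥ n₀. Let H be a graph with at least n vertices such that δ(H) ≥ ξn and all but at most μn vertices v of H satisfy d(v) ≥ |H| − μn. Let T be an n-vertex tree with Δ(T) ≤ μn that contains at least 10μn pairwise vertex-disjoint bare paths of length 4. Then for every vertex t of T not lying on any of these bare paths and every vertex u of H, there is an embedding of T into H mapping t to u. -/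
open SimpleGraph

/-- `p` is a bare path of length 4 in `T`: five distinct vertices, consecutive ones adjacent,
whose three internal vertices have degree exactly 2 in `T`. -/
def IsBarePath4 {V : Type*} (T : SimpleGraph V) (p : Fin 5 → V) : Prop :=
  Function.Injective p ∧ (∀ i : Fin 4, T.Adj (p i.castSucc) (p i.succ)) ∧
    ∀ i : Fin 5, i ≠ 0 → i ≠ 4 → (T.neighborSet (p i)).ncard = 2


variable {n : ℕ} {T : SimpleGraph (Fin n)}

lemma tree_path_length (hT : T.IsTree) {x y : Fin n} (p : T.Walk x y) (hp : p.IsPath) :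
    p.length = T.dist x y := by
  obtain ⟨q, hq⟩ := hT.isConnected.exists_walk_length_eq_dist x y
  have hbp : q.bypass.IsPath := SimpleGraph.Walk.bypass_isPath q
  have h1 : q.bypass.length ≤ q.length := SimpleGraph.Walk.length_bypass_le q
  have h2 : T.dist x y ≤ q.bypass.length := SimpleGraph.dist_le _
  have heq : p = q.bypass := by
    obtain ⟨r, _, hr⟩ := hT.existsUnique_path x y
    rw [hr p hp, hr q.bypass hbp]
  rw [heq]; omega

/-- distance to a support vertex of a path from its start is at most the path length -/
lemma dist_le_of_mem_support {x y z : Fin n} (p : T.Walk x y) (hz : z ∈ p.support) :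
    T.dist x z ≤ p.length := by
  calc T.dist x z ≤ (p.takeUntil z hz).length := SimpleGraph.dist_le _
  _ ≤ p.length := SimpleGraph.Walk.length_takeUntil_le p hz

/-- adjacent vertices have distances from t differing by exactly one, in a tree -/
lemma tree_adj_dist (hT : T.IsTree) (t : Fin n) {x y : Fin n} (hxy : T.Adj x y) :
    T.dist t x + 1 = T.dist t y ∨ T.dist t y + 1 = T.dist t x := by
  -- wlog via cases on ≤
  have key : ∀ a b : Fin n, T.Adj a b → T.dist t a ≤ T.dist t b → T.dist t a + 1 = T.dist t b := by
    intro a b hab hle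
    obtain ⟨p, hp, _⟩ := hT.existsUnique_path t a
    have hlen : p.length = T.dist t a := tree_path_length hT p hp
    have hbs : b ∉ p.support := by
      intro hmem
      have h1 : T.dist t b ≤ p.length := dist_le_of_mem_support p hmem
      -- then takeUntil is a path from t to b with length = dist t b ≤ dist t a ≤ dist t b
      -- so takeUntil length = p.length, forcing b = a
      have htu : (p.takeUntil b hmem).IsPath := hp.takeUntil hmem
      have h2 : (p.takeUntil b hmem).length = T.dist t b := tree_path_length hT _ htu
      have h3 : (p.takeUntil b hmem).append (p.dropUntil b hmem) = p :=
        SimpleGraph.Walk.take_spec p hmem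
      have h4 : (p.takeUntil b hmem).length + (p.dropUntil b hmem).length = p.length := by
        rw [← SimpleGraph.Walk.length_append, h3]
      have h5 : (p.dropUntil b hmem).length = 0 := by omega
      have h6 : b = a := by
        have := SimpleGraph.Walk.eq_of_length_eq_zero h5
        exact this
      exact hab.ne (h6 ▸ rfl)
    have hcp : (p.concat hab).IsPath := by
      rw [SimpleGraph.Walk.isPath_def, SimpleGraph.Walk.support_concat]
      refine List.Nodup.append hp.support_nodup (List.nodup_singleton b) ?_
      intro z hz hz'
      simp at hz'
      exact hbs (hz' ▸ hz)
    have : (p.concat hab).length = T.dist t b := tree_path_length hT _ hcp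
    rw [SimpleGraph.Walk.length_concat] at this
    omega
  rcases le_total (T.dist t x) (T.dist t y) with h | h
  · exact Or.inl (key x y hxy h)
  · exact Or.inr (key y x hxy.symm h)

lemma tree_concat_isPath (hT : T.IsTree) (t : Fin n) {a v : Fin n} (hav : T.Adj a v)
    (hd : T.dist t a + 1 = T.dist t v) {p : T.Walk t a} (hp : p.IsPath) :
    (p.concat hav).IsPath := by
  have hlen : p.length = T.dist t a := tree_path_length hT p hp
  have hvs : v ∉ p.support := by
    intro hmem
    have := dist_le_of_mem_support p hmem
    omega
  rw [SimpleGraph.Walk.isPath_def, SimpleGraph.Walk.support_concat]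
  refine List.Nodup.append hp.support_nodup (List.nodup_singleton v) ?_
  intro z hz hz'
  simp at hz'
  exact hvs (hz' ▸ hz)

lemma tree_parent_eq_getVert (hT : T.IsTree) (t : Fin n) {a v : Fin n} (hav : T.Adj a v)
    (hd : T.dist t a + 1 = T.dist t v) {q : T.Walk t v} (hq : q.IsPath) :
    a = q.getVert (T.dist t a) := by
  obtain ⟨p, hp, _⟩ := hT.existsUnique_path t a
  have hlen : p.length = T.dist t a := tree_path_length hT p hp
  have hcp : (p.concat hav).IsPath := tree_concat_isPath hT t hav hd hp
  have heq : q = p.concat hav := by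
    obtain ⟨r, _, hr⟩ := hT.existsUnique_path t v
    rw [hr q hq, hr (p.concat hav) hcp]
  rw [heq, SimpleGraph.Walk.concat_eq_append, SimpleGraph.Walk.getVert_append]
  rw [if_neg (by omega)]
  rw [← hlen]
  simp

lemma tree_parent_unique (hT : T.IsTree) (t : Fin n) {x x' v : Fin n}
    (hx : T.Adj x v) (hx' : T.Adj x' v)
    (hdx : T.dist t x + 1 = T.dist t v) (hdx' : T.dist t x' + 1 = T.dist t v) : x = x' := by
  obtain ⟨q, hq, _⟩ := hT.existsUnique_path t v
  have h1 := tree_parent_eq_getVert hT t hx hdx hq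
  have h2 := tree_parent_eq_getVert hT t hx' hdx' hq
  rw [h1, h2]
  congr 1
  omega

lemma tree_parent_exists (hT : T.IsTree) (t : Fin n) {v : Fin n} (hv : v ≠ t) :
    ∃ x : Fin n, T.Adj x v ∧ T.dist t x + 1 = T.dist t v := by
  have hr : T.Reachable t v := hT.isConnected t v
  have hd0 : T.dist t v ≠ 0 := by
    intro h
    exact hv ((hr.dist_eq_zero_iff.mp h)).symm
  obtain ⟨q, hq⟩ := hr.exists_walk_length_eq_dist
  have hql : q.length = T.dist t v := hq
  set d := T.dist t v with hdd
  have hlt : d - 1 < q.length := by omega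
  have hadj : T.Adj (q.getVert (d-1)) (q.getVert (d-1+1)) := q.adj_getVert_succ hlt
  have hgv : q.getVert (d-1+1) = v := by
    have : d - 1 + 1 = q.length := by omega
    rw [this]; exact q.getVert_length
  rw [hgv] at hadj
  refine ⟨q.getVert (d-1), hadj, ?_⟩
  rcases tree_adj_dist hT t hadj with h | h
  · omega
  · -- dist t v + 1 = dist t x: impossible since dist t x ≤ d
    exfalso
    have hxs : q.getVert (d-1) ∈ q.support := SimpleGraph.Walk.mem_support_iff_exists_getVert.mpr ⟨d-1, rfl, by omega⟩
    have := dist_le_of_mem_support q hxs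
    omega

/-- Phase 1: greedily embed the non-interior vertices `D` of the tree. -/
lemma phase1 {V : Type} [Fintype V] [DecidableEq V] (H : SimpleGraph V) [DecidableRel H.Adj]
    {n : ℕ} {T : SimpleGraph (Fin n)} [DecidableRel T.Adj] (hT : T.IsTree) (t : Fin n)
    (par : Fin n → Fin n)
    (hpar : ∀ v, v ≠ t → T.Adj (par v) v ∧ T.dist t (par v) + 1 = T.dist t v)
    (D : Finset (Fin n)) (htD : t ∈ D)
    (X : Finset V) (u : V)
    (h1 : X.card + T.degree t + 3 ≤ H.degree u)
    (h2 : ∀ v, v ∉ X → v ≠ u → D.card + X.card + 2 ≤ H.degree v)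
    (h3 : D.card + X.card + 2 ≤ Fintype.card V) :
    ∃ f : Fin n → V, Set.InjOn f ↑D ∧ f t = u ∧
      (∀ x ∈ D, x ≠ t → f x ∉ X ∧ f x ≠ u) ∧
      (∀ x ∈ D, ∀ y ∈ D, T.Adj x y → H.Adj (f x) (f y)) := by
  let Good : (Fin n → V) → Finset (Fin n) → Prop := fun f S =>
    Set.InjOn f ↑S ∧ (t ∈ S → f t = u) ∧
      (∀ x ∈ S, x ≠ t → f x ∉ X ∧ f x ≠ u) ∧
      (∀ x ∈ S, ∀ y ∈ S, T.Adj x y → H.Adj (f x) (f y))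
  have tmem : ∀ S : Finset (Fin n), S ⊆ D →
      (∀ s ∈ S, ∀ z ∈ D, z ∉ S → T.dist t s ≤ T.dist t z) → S.Nonempty → t ∈ S := by
    intro S hSD hideal ⟨s, hs⟩
    by_contra htS
    have h0 := hideal s hs t htD htS
    have hds : T.dist t s = 0 := by
      have : T.dist t t = 0 := SimpleGraph.dist_self
      omega
    have : t = s := (hT.isConnected t s).dist_eq_zero_iff.mp hds
    exact htS (this ▸ hs)
  have main : ∀ m (S : Finset (Fin n)), (D \ S).card = m → S ⊆ D →
      (∀ s ∈ S, ∀ z ∈ D, z ∉ S → T.dist t s ≤ T.dist t z) →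
      (∃ f, Good f S) → ∃ f, Good f D := by
    intro m
    induction m with
    | zero =>
      intro S hcard hSD _ hf
      have : D = S := by
        apply Finset.Subset.antisymm _ hSD
        intro z hz
        by_contra hzS
        have : z ∈ D \ S := Finset.mem_sdiff.mpr ⟨hz, hzS⟩
        rw [Finset.card_eq_zero] at hcard
        simp [hcard] at this
      rw [this]; exact hf
    | succ m ih =>
      intro S hcard hSD hideal hex
      obtain ⟨f, hInj, htval, havoid, hadjf⟩ := hex
      have hne : (D \ S).Nonempty := Finset.card_pos.mp (by omega)
      obtain ⟨x, hxDS, hxmin⟩ := Finset.exists_min_image (D \ S) (T.dist t) hne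
      obtain ⟨hxD, hxS⟩ := Finset.mem_sdiff.mp hxDS
      have hxmin' : ∀ z ∈ D, z ∉ S → T.dist t x ≤ T.dist t z := by
        intro z hz hzS
        exact hxmin z (Finset.mem_sdiff.mpr ⟨hz, hzS⟩)
      have hScard : S.card + 1 ≤ D.card := by
        have h5 : (D \ S).card = D.card - S.card := Finset.card_sdiff_of_subset hSD
        have h6 := Finset.card_le_card hSD
        omega
      -- choose the new image c
      have key : ∃ c : V, (x ≠ t → c ∉ X ∧ c ≠ u) ∧ c ∉ S.image f ∧ (x = t → c = u) ∧
          (x ≠ t → par x ∈ D → H.Adj (f (par x)) c) := by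
        by_cases hxt : x = t
        · have hSe : S = ∅ := by
            by_contra hSne
            exact hxS (hxt ▸ tmem S hSD hideal (Finset.nonempty_iff_ne_empty.mpr hSne))
          exact ⟨u, fun h => absurd hxt h, by simp [hSe], fun _ => rfl,
            fun h _ => absurd hxt h⟩
        · have htS : t ∈ S := by
            rcases Finset.eq_empty_or_nonempty S with hSe | hSne
            · exfalso
              have := hxmin' t htD (by simp [hSe])
              have h7 : T.dist t t = 0 := SimpleGraph.dist_self
              have h8 : T.dist t x = 0 := by omega
              exact hxt ((hT.isConnected t x).dist_eq_zero_iff.mp h8).symm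
            · exact tmem S hSD hideal hSne
          obtain ⟨hpadj, hpdist⟩ := hpar x hxt
          by_cases hpD : par x ∈ D
          · have hpS : par x ∈ S := by
              by_contra hpS
              have := hxmin' (par x) hpD hpS
              omega
            set A := H.neighborFinset (f (par x)) \ (X ∪ S.image f ∪ {u}) with hA
            have hAne : A.Nonempty := by
              rw [Finset.nonempty_iff_ne_empty]
              intro hAe
              have hsub : H.neighborFinset (f (par x)) ⊆ X ∪ S.image f ∪ {u} :=
                Finset.sdiff_eq_empty_iff_subset.mp hAe
              have hcle : H.degree (f (par x)) ≤ X.card + S.card + 1 := by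
                calc H.degree (f (par x)) = (H.neighborFinset (f (par x))).card :=
                      (SimpleGraph.card_neighborFinset_eq_degree _ _).symm
                  _ ≤ (X ∪ S.image f ∪ {u}).card := Finset.card_le_card hsub
                  _ ≤ (X ∪ S.image f).card + 1 := by
                      have := Finset.card_union_le (X ∪ S.image f) ({u} : Finset V)
                      simpa using this
                  _ ≤ X.card + S.card + 1 := by
                      have h9 := Finset.card_union_le X (S.image f)
                      have h10 := Finset.card_image_le (s := S) (f := f)
                      omega
              by_cases hpt : par x = t
              · -- f (par x) = u, and S ⊆ insert t (neighbors of t)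
                have hfu : f (par x) = u := by rw [hpt]; exact htval htS
                have hSsub : S ⊆ insert t (T.neighborFinset t) := by
                  intro s hs
                  by_cases hst : s = t
                  · simp [hst]
                  · have hd1 : T.dist t x = 1 := by
                      rw [hpt] at hpdist
                      have : T.dist t t = 0 := SimpleGraph.dist_self
                      omega
                    have hds : T.dist t s ≤ 1 := hd1 ▸ hideal s hs x hxD hxS
                    have hds0 : T.dist t s ≠ 0 := by
                      intro h0
                      exact hst ((hT.isConnected t s).dist_eq_zero_iff.mp h0).symm
                    have : T.dist t s = 1 := by omega
                    have hadj : T.Adj t s := SimpleGraph.dist_eq_one_iff_adj.mp this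
                    simp [SimpleGraph.mem_neighborFinset, hadj]
                have hcard2 : S.card ≤ T.degree t + 1 := by
                  calc S.card ≤ (insert t (T.neighborFinset t)).card :=
                        Finset.card_le_card hSsub
                    _ ≤ (T.neighborFinset t).card + 1 := Finset.card_insert_le _ _
                    _ = T.degree t + 1 := by rw [SimpleGraph.card_neighborFinset_eq_degree]
                rw [hfu] at hcle
                omega
              · have := h2 (f (par x)) (havoid (par x) hpS hpt).1 (havoid (par x) hpS hpt).2
                omega
            obtain ⟨c, hc⟩ := hAne
            rw [hA] at hc
            simp only [Finset.mem_sdiff, Finset.mem_union, Finset.mem_singleton,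
              SimpleGraph.mem_neighborFinset, not_or] at hc
            obtain ⟨hadjc, ⟨hXc, himc⟩, huc⟩ := hc
            exact ⟨c, fun _ => ⟨hXc, huc⟩, himc, fun h => absurd h hxt,
              fun _ _ => hadjc⟩
          · set A := (Finset.univ : Finset V) \ (X ∪ S.image f ∪ {u}) with hA
            have hAne : A.Nonempty := by
              rw [Finset.nonempty_iff_ne_empty]
              intro hAe
              have hsub : (Finset.univ : Finset V) ⊆ X ∪ S.image f ∪ {u} :=
                Finset.sdiff_eq_empty_iff_subset.mp hAe
              have hcle : Fintype.card V ≤ X.card + S.card + 1 := by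
                calc Fintype.card V = (Finset.univ : Finset V).card := (Finset.card_univ).symm
                  _ ≤ (X ∪ S.image f ∪ {u}).card := Finset.card_le_card hsub
                  _ ≤ (X ∪ S.image f).card + 1 := by
                      have := Finset.card_union_le (X ∪ S.image f) ({u} : Finset V)
                      simpa using this
                  _ ≤ X.card + S.card + 1 := by
                      have h9 := Finset.card_union_le X (S.image f)
                      have h10 := Finset.card_image_le (s := S) (f := f)
                      omega
              omega
            obtain ⟨c, hc⟩ := hAne
            rw [hA] at hc
            simp only [Finset.mem_sdiff, Finset.mem_union, Finset.mem_singleton, not_or] at hc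
            obtain ⟨-, ⟨hXc, himc⟩, huc⟩ := hc
            exact ⟨c, fun _ => ⟨hXc, huc⟩, himc, fun h => absurd h hxt,
              fun _ h => absurd h hpD⟩
      obtain ⟨c, hcXu, hcim, hctu, hcadj⟩ := key
      set f' := Function.update f x c with hf'
      have hfS : ∀ y ∈ S, f' y = f y := by
        intro y hy
        apply Function.update_of_ne
        intro h; exact hxS (h ▸ hy)
      have hfx : f' x = c := Function.update_self x c f
      have hGood : Good f' (insert x S) := by
        refine ⟨?_, ?_, ?_, ?_⟩
        · rw [Finset.coe_insert]
          rw [Set.injOn_insert (fun hmem => hxS (by exact_mod_cast hmem))]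
          constructor
          · intro a ha b hb hab
            rw [hfS a (by exact_mod_cast ha), hfS b (by exact_mod_cast hb)] at hab
            exact hInj ha hb hab
          · rw [hfx]
            intro hmem
            obtain ⟨y, hy, hyc⟩ := hmem
            rw [hfS y (by exact_mod_cast hy)] at hyc
            exact hcim (Finset.mem_image.mpr ⟨y, by exact_mod_cast hy, hyc⟩)
        · intro htI
          rcases Finset.mem_insert.mp htI with h | h
          · rw [h, hfx]
            exact hctu h.symm
          · rw [hfS t h]
            exact htval h
        · intro y hy hyt
          rcases Finset.mem_insert.mp hy with h | h
          · rw [h, hfx]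
            exact hcXu (h ▸ hyt)
          · rw [hfS y h]
            exact havoid y h hyt
        · intro a ha b hb hab
          rcases Finset.mem_insert.mp ha with h1' | h1' <;>
            rcases Finset.mem_insert.mp hb with h2' | h2'
          · exfalso; exact hab.ne (h1'.trans h2'.symm)
          · -- a = x, b ∈ S
            subst h1'
            rcases tree_adj_dist hT t hab with hd | hd
            · -- dist a + 1 = dist b, so a = par b, contradiction with ideal
              exfalso
              have hbt : b ≠ t := by
                intro h; rw [h] at hd
                have : T.dist t t = 0 := SimpleGraph.dist_self
                omega
              have := hideal b h2' a hxD hxS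
              omega
            · -- dist b + 1 = dist a: b = par a
              have hat : a ≠ t := by
                intro h; rw [h] at hd
                have : T.dist t t = 0 := SimpleGraph.dist_self
                omega
              obtain ⟨hpadj, hpdist⟩ := hpar a hat
              have hbpar : b = par a :=
                tree_parent_unique hT t hab.symm hpadj hd hpdist
              have hpD : par a ∈ D := hbpar ▸ hSD h2'
              have := hcadj hat hpD
              rw [hfx, hfS b h2', hbpar]
              exact this.symm
          · -- b = x, a ∈ S : symmetric
            subst h2'
            rcases tree_adj_dist hT t hab with hd | hd
            · have hbt : b ≠ t := by
                intro h; rw [h] at hd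
                have : T.dist t t = 0 := SimpleGraph.dist_self
                omega
              obtain ⟨hpadj, hpdist⟩ := hpar b hbt
              have hapar : a = par b :=
                tree_parent_unique hT t hab hpadj hd hpdist
              have hpD : par b ∈ D := hapar ▸ hSD h1'
              have := hcadj hbt hpD
              rw [hfx, hfS a h1', hapar]
              exact this
            · exfalso
              have hat : a ≠ t := by
                intro h; rw [h] at hd
                have : T.dist t t = 0 := SimpleGraph.dist_self
                omega
              have := hideal a h1' b hxD hxS
              omega
          · rw [hfS a h1', hfS b h2']
            exact hadjf a h1' b h2' hab
      have hcard' : (D \ insert x S).card = m := by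
        have : D \ insert x S = (D \ S).erase x := by
          ext z
          simp only [Finset.mem_sdiff, Finset.mem_insert, Finset.mem_erase, not_or]
          tauto
        rw [this, Finset.card_erase_of_mem hxDS, hcard]
        omega
      refine ih (insert x S) hcard' (Finset.insert_subset hxD hSD) ?_ ⟨f', hGood⟩
      intro s hs z hz hzI
      have hzS : z ∉ S := fun h => hzI (Finset.mem_insert_of_mem h)
      have hzx : z ≠ x := fun h => hzI (h ▸ Finset.mem_insert_self x S)
      rcases Finset.mem_insert.mp hs with h | h
      · rw [h]; exact hxmin' z hz hzS
      · exact hideal s h z hz hzS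
  have hstart : ∃ f, Good f (∅ : Finset (Fin n)) := by
    refine ⟨fun _ => u, ?_, ?_, ?_, ?_⟩ <;> simp
  obtain ⟨f, hInj, htval, havoid, hadjf⟩ :=
    main (D \ ∅).card ∅ rfl (Finset.empty_subset D) (by simp) hstart
  exact ⟨f, hInj, htval htD, havoid, hadjf⟩

lemma count_nonadj {V : Type} [Fintype V] [DecidableEq V] (H : SimpleGraph V)
    [DecidableRel H.Adj] {k : ℕ} (a : Fin k → V) {J : Finset (Fin k)}
    (ha : Set.InjOn a ↑J) (w : V) :
    (J.filter fun i => ¬ H.Adj w (a i)).card ≤ Fintype.card V - H.degree w := by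
  have hmaps : ∀ i ∈ (J.filter fun i => ¬ H.Adj w (a i)), a i ∈ Finset.univ \ H.neighborFinset w := by
    intro i hi
    rw [Finset.mem_filter] at hi
    simp [SimpleGraph.mem_neighborFinset, hi.2]
  have hinj : Set.InjOn a ↑(J.filter fun i => ¬ H.Adj w (a i)) := by
    intro x hx y hy h
    simp only [Finset.coe_filter, Set.mem_setOf_eq] at hx hy
    exact ha (by exact_mod_cast hx.1) (by exact_mod_cast hy.1) h
  calc (J.filter fun i => ¬ H.Adj w (a i)).card
      ≤ (Finset.univ \ H.neighborFinset w).card := Finset.card_le_card_of_injOn a hmaps hinj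
    _ = Fintype.card V - H.degree w := by
        rw [Finset.card_sdiff_of_subset (Finset.subset_univ _), Finset.card_univ,
          SimpleGraph.card_neighborFinset_eq_degree]

lemma reserve {V : Type} [Fintype V] [DecidableEq V] (H : SimpleGraph V) [DecidableRel H.Adj]
    (W' : Finset V) (u : V) (b : ℕ) (hW : W'.card ≤ b)
    (hdeg : ∀ w ∈ W', 3 * b + 3 ≤ H.degree w) :
    ∃ r1 r2 : V → V,
      (∀ w ∈ W', H.Adj w (r1 w) ∧ H.Adj w (r2 w) ∧ r1 w ∉ W' ∧ r2 w ∉ W' ∧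
        r1 w ≠ u ∧ r2 w ≠ u ∧ r1 w ≠ r2 w) ∧
      (∀ w ∈ W', ∀ w' ∈ W', w ≠ w' →
        r1 w ≠ r1 w' ∧ r1 w ≠ r2 w' ∧ r2 w ≠ r1 w' ∧ r2 w ≠ r2 w') := by
  have main : ∀ A : Finset V, A ⊆ W' → ∃ r1 r2 : V → V,
      (∀ w ∈ A, H.Adj w (r1 w) ∧ H.Adj w (r2 w) ∧ r1 w ∉ W' ∧ r2 w ∉ W' ∧
        r1 w ≠ u ∧ r2 w ≠ u ∧ r1 w ≠ r2 w) ∧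
      (∀ w ∈ A, ∀ w' ∈ A, w ≠ w' →
        r1 w ≠ r1 w' ∧ r1 w ≠ r2 w' ∧ r2 w ≠ r1 w' ∧ r2 w ≠ r2 w') := by
    intro A
    induction A using Finset.induction_on with
    | empty => exact fun _ => ⟨id, id, by simp, by simp⟩
    | @insert w A hwA ih =>
      intro hsub
      obtain ⟨r1, r2, hprops, hdisj⟩ := ih (fun z hz => hsub (Finset.mem_insert_of_mem hz))
      have hwW : w ∈ W' := hsub (Finset.mem_insert_self w A)
      have hAcard : A.card ≤ b := le_trans (Finset.card_le_card
        (fun z hz => hsub (Finset.mem_insert_of_mem hz))) hW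
      -- choose x then y
      have hpick : ∀ (E : Finset V), E.card ≤ 3 * b + 2 →
          ∃ c, H.Adj w c ∧ c ∉ E := by
        intro E hE
        have hne : (H.neighborFinset w \ E).Nonempty := by
          rw [Finset.nonempty_iff_ne_empty]
          intro h
          have hsub2 : H.neighborFinset w ⊆ E := Finset.sdiff_eq_empty_iff_subset.mp h
          have := Finset.card_le_card hsub2
          rw [SimpleGraph.card_neighborFinset_eq_degree] at this
          have := hdeg w hwW
          omega
        obtain ⟨c, hc⟩ := hne
        rw [Finset.mem_sdiff, SimpleGraph.mem_neighborFinset] at hc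
        exact ⟨c, hc.1, hc.2⟩
      have hxE : (W' ∪ {u} ∪ A.image r1 ∪ A.image r2).card ≤ 3 * b + 1 := by
        have e1 := Finset.card_union_le (W' ∪ {u} ∪ A.image r1) (A.image r2)
        have e2 := Finset.card_union_le (W' ∪ {u}) (A.image r1)
        have e3 := Finset.card_union_le W' ({u} : Finset V)
        have e4 := Finset.card_image_le (s := A) (f := r1)
        have e5 := Finset.card_image_le (s := A) (f := r2)
        simp only [Finset.card_singleton] at e3
        omega
      obtain ⟨x, hxadj, hxE'⟩ := hpick _ (le_trans hxE (by omega))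
      have hyE : (W' ∪ {u} ∪ A.image r1 ∪ A.image r2 ∪ {x}).card ≤ 3 * b + 2 := by
        have := Finset.card_union_le (W' ∪ {u} ∪ A.image r1 ∪ A.image r2) ({x} : Finset V)
        simp only [Finset.card_singleton] at this
        omega
      obtain ⟨y, hyadj, hyE'⟩ := hpick _ hyE
      refine ⟨Function.update r1 w x, Function.update r2 w y, ?_, ?_⟩
      · intro w' hw'
        rcases Finset.mem_insert.mp hw' with h | h
        · subst h
          rw [Function.update_self, Function.update_self]
          simp only [Finset.mem_union, Finset.mem_singleton, not_or] at hxE' hyE'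
          exact ⟨hxadj, hyadj, hxE'.1.1.1, hyE'.1.1.1.1, hxE'.1.1.2, hyE'.1.1.1.2,
            fun h => hyE'.2 h.symm⟩
        · have hne : w' ≠ w := fun he => hwA (he ▸ h)
          rw [Function.update_of_ne hne, Function.update_of_ne hne]
          exact hprops w' h
      · intro w1 hw1 w2 hw2 hne12
        rcases Finset.mem_insert.mp hw1 with h1 | h1 <;>
          rcases Finset.mem_insert.mp hw2 with h2 | h2
        · exact absurd (h1.trans h2.symm) hne12
        · subst h1
          have hne2 : w2 ≠ w1 := fun he => hwA (he ▸ h2)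
          rw [Function.update_self, Function.update_self,
            Function.update_of_ne hne2, Function.update_of_ne hne2]
          simp only [Finset.mem_union, Finset.mem_singleton, not_or] at hxE' hyE'
          refine ⟨fun h => hxE'.1.2 (h ▸ Finset.mem_image_of_mem r1 h2),
            fun h => hxE'.2 (h ▸ Finset.mem_image_of_mem r2 h2),
            fun h => hyE'.1.1.2 (h ▸ Finset.mem_image_of_mem r1 h2),
            fun h => hyE'.1.2 (h ▸ Finset.mem_image_of_mem r2 h2)⟩
        · subst h2
          have hne1 : w1 ≠ w2 := fun he => hwA (he ▸ h1)
          rw [Function.update_self, Function.update_self,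
            Function.update_of_ne hne1, Function.update_of_ne hne1]
          simp only [Finset.mem_union, Finset.mem_singleton, not_or] at hxE' hyE'
          refine ⟨fun h => hxE'.1.2 (h.symm ▸ Finset.mem_image_of_mem r1 h1),
            fun h => hyE'.1.1.2 (h.symm ▸ Finset.mem_image_of_mem r1 h1),
            fun h => hxE'.2 (h.symm ▸ Finset.mem_image_of_mem r2 h1),
            fun h => hyE'.1.2 (h.symm ▸ Finset.mem_image_of_mem r2 h1)⟩
        · have hne1 : w1 ≠ w := fun he => hwA (he ▸ h1)
          have hne2 : w2 ≠ w := fun he => hwA (he ▸ h2)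
          rw [Function.update_of_ne hne1, Function.update_of_ne hne1,
            Function.update_of_ne hne2, Function.update_of_ne hne2]
          exact hdisj w1 h1 w2 h2 hne12
  exact main W' (le_refl W' : W' ⊆ W')

lemma assignA {V : Type} [DecidableEq V] {k : ℕ} (hk : 0 < k) (B : Finset V)
    (bad : V → Finset (Fin k))
    (hbad : ∀ w ∈ B, (bad w).card + B.card ≤ k) :
    ∃ g : V → Fin k, Set.InjOn g ↑B ∧ ∀ w ∈ B, g w ∉ bad w := by
  have main : ∀ A : Finset V, A ⊆ B → ∃ g : V → Fin k,
      Set.InjOn g ↑A ∧ ∀ w ∈ A, g w ∉ bad w := by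
    intro A
    induction A using Finset.induction_on with
    | empty => exact fun _ => ⟨fun _ => ⟨0, hk⟩, by simp, by simp⟩
    | @insert w A hwA ih =>
      intro hsub
      obtain ⟨g, hInj, hgood⟩ := ih (fun z hz => hsub (Finset.mem_insert_of_mem hz))
      have hwB : w ∈ B := hsub (Finset.mem_insert_self w A)
      have hAcard : A.card + 1 ≤ B.card := by
        have := Finset.card_le_card (Finset.insert_subset hwB
          (fun z hz => hsub (Finset.mem_insert_of_mem hz)) : insert w A ⊆ B)
        rw [Finset.card_insert_of_notMem hwA] at this
        omega
      have hne : ((Finset.univ : Finset (Fin k)) \ (bad w ∪ A.image g)).Nonempty := by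
        rw [Finset.nonempty_iff_ne_empty]
        intro h
        have hsub2 : (Finset.univ : Finset (Fin k)) ⊆ bad w ∪ A.image g :=
          Finset.sdiff_eq_empty_iff_subset.mp h
        have hc := Finset.card_le_card hsub2
        rw [Finset.card_univ, Fintype.card_fin] at hc
        have e1 := Finset.card_union_le (bad w) (A.image g)
        have e2 := Finset.card_image_le (s := A) (f := g)
        have := hbad w hwB
        omega
      obtain ⟨i, hi⟩ := hne
      rw [Finset.mem_sdiff, Finset.mem_union, not_or] at hi
      refine ⟨Function.update g w i, ?_, ?_⟩
      · rw [Finset.coe_insert, Set.injOn_insert (fun hmem => hwA (by exact_mod_cast hmem))]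
        constructor
        · intro p hp q hq hpq
          have hpw : p ≠ w := fun he => hwA (he ▸ hp)
          have hqw : q ≠ w := fun he => hwA (he ▸ hq)
          rw [Function.update_of_ne hpw, Function.update_of_ne hqw] at hpq
          exact hInj hp hq hpq
        · rw [Function.update_self]
          intro hmem
          obtain ⟨p, hp, hpv⟩ := hmem
          have hpw : p ≠ w := fun he => hwA (he ▸ (by exact_mod_cast hp : p ∈ A))
          rw [Function.update_of_ne hpw] at hpv
          exact hi.2.2 (hpv ▸ Finset.mem_image_of_mem g (by exact_mod_cast hp))
      · intro w' hw'
        rcases Finset.mem_insert.mp hw' with h | h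
        · subst h; rw [Function.update_self]; exact hi.2.1
        · have hne' : w' ≠ w := fun he => hwA (he ▸ h)
          rw [Function.update_of_ne hne']
          exact hgood w' h
  exact main B (le_refl B : B ⊆ B)

lemma stepB {V : Type} [Fintype V] [DecidableEq V] [Nonempty V] (H : SimpleGraph V)
    [DecidableRel H.Adj]
    {k : ℕ} (J : Finset (Fin k)) (U₁ : Finset V) (a b : Fin k → V)
    (hcount : ∀ i ∈ J, 2 * J.card + 1 ≤ (U₁ ∩ H.neighborFinset (a i)).card ∧
      2 * J.card + 1 ≤ (U₁ ∩ H.neighborFinset (b i)).card) :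
    ∃ c1 c3 : Fin k → V,
      (∀ i ∈ J, c1 i ∈ U₁ ∧ c3 i ∈ U₁ ∧ H.Adj (a i) (c1 i) ∧ H.Adj (b i) (c3 i) ∧ c1 i ≠ c3 i) ∧
      (∀ i ∈ J, ∀ j ∈ J, i ≠ j →
        c1 i ≠ c1 j ∧ c1 i ≠ c3 j ∧ c3 i ≠ c1 j ∧ c3 i ≠ c3 j) := by
  have main : ∀ A : Finset (Fin k), A ⊆ J → ∃ c1 c3 : Fin k → V,
      (∀ i ∈ A, c1 i ∈ U₁ ∧ c3 i ∈ U₁ ∧ H.Adj (a i) (c1 i) ∧ H.Adj (b i) (c3 i) ∧ c1 i ≠ c3 i) ∧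
      (∀ i ∈ A, ∀ j ∈ A, i ≠ j →
        c1 i ≠ c1 j ∧ c1 i ≠ c3 j ∧ c3 i ≠ c1 j ∧ c3 i ≠ c3 j) := by
    intro A
    induction A using Finset.induction_on with
    | empty => exact fun _ => ⟨fun _ => Classical.arbitrary _, fun _ => Classical.arbitrary _,
        by simp, by simp⟩

    | @insert i A hiA ih =>
      intro hsub
      obtain ⟨c1, c3, hprops, hdisj⟩ := ih (fun z hz => hsub (Finset.mem_insert_of_mem hz))
      have hiJ : i ∈ J := hsub (Finset.mem_insert_self i A)
      have hAcard : A.card + 1 ≤ J.card := by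
        have := Finset.card_le_card (Finset.insert_subset hiJ
          (fun z hz => hsub (Finset.mem_insert_of_mem hz)) : insert i A ⊆ J)
        rw [Finset.card_insert_of_notMem hiA] at this
        omega
      have hpick : ∀ (N : Finset V), 2 * J.card + 1 ≤ (U₁ ∩ N).card →
          ∀ (E : Finset V), E.card ≤ 2 * J.card → ∃ c, c ∈ U₁ ∧ c ∈ N ∧ c ∉ E := by
        intro N hN E hE
        have hne : ((U₁ ∩ N) \ E).Nonempty := by
          rw [Finset.nonempty_iff_ne_empty]
          intro h
          have := Finset.card_le_card (Finset.sdiff_eq_empty_iff_subset.mp h)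
          omega
        obtain ⟨c, hc⟩ := hne
        rw [Finset.mem_sdiff, Finset.mem_inter] at hc
        exact ⟨c, hc.1.1, hc.1.2, hc.2⟩
      have hE1 : (A.image c1 ∪ A.image c3).card ≤ 2 * J.card := by
        have e1 := Finset.card_union_le (A.image c1) (A.image c3)
        have e2 := Finset.card_image_le (s := A) (f := c1)
        have e3 := Finset.card_image_le (s := A) (f := c3)
        omega
      obtain ⟨x, hxU, hxN, hxE⟩ := hpick _ (hcount i hiJ).1 _ (le_trans hE1 (by omega))
      have hE2 : (A.image c1 ∪ A.image c3 ∪ {x}).card ≤ 2 * J.card := by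
        have e0 := Finset.card_union_le (A.image c1 ∪ A.image c3) ({x} : Finset V)
        have e1 := Finset.card_union_le (A.image c1) (A.image c3)
        have e2 := Finset.card_image_le (s := A) (f := c1)
        have e3 := Finset.card_image_le (s := A) (f := c3)
        simp only [Finset.card_singleton] at e0
        omega
      obtain ⟨y, hyU, hyN, hyE⟩ := hpick _ (hcount i hiJ).2 _ hE2
      rw [SimpleGraph.mem_neighborFinset] at hxN hyN
      simp only [Finset.mem_union, Finset.mem_singleton, not_or] at hxE hyE
      refine ⟨Function.update c1 i x, Function.update c3 i y, ?_, ?_⟩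
      · intro j hj
        rcases Finset.mem_insert.mp hj with h | h
        · subst h
          rw [Function.update_self, Function.update_self]
          exact ⟨hxU, hyU, hxN, hyN, fun h => hyE.2 h.symm⟩
        · have hne' : j ≠ i := fun he => hiA (he ▸ h)
          rw [Function.update_of_ne hne', Function.update_of_ne hne']
          exact hprops j h
      · intro p hp q hq hpq
        rcases Finset.mem_insert.mp hp with h1 | h1 <;>
          rcases Finset.mem_insert.mp hq with h2 | h2
        · exact absurd (h1.trans h2.symm) hpq
        · subst h1
          have hne2 : q ≠ p := fun he => hiA (he ▸ h2)
          rw [Function.update_self, Function.update_self,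
            Function.update_of_ne hne2, Function.update_of_ne hne2]
          exact ⟨fun h => hxE.1 (h ▸ Finset.mem_image_of_mem c1 h2),
            fun h => hxE.2 (h ▸ Finset.mem_image_of_mem c3 h2),
            fun h => hyE.1.1 (h ▸ Finset.mem_image_of_mem c1 h2),
            fun h => hyE.1.2 (h ▸ Finset.mem_image_of_mem c3 h2)⟩
        · subst h2
          have hne1 : p ≠ q := fun he => hiA (he ▸ h1)
          rw [Function.update_self, Function.update_self,
            Function.update_of_ne hne1, Function.update_of_ne hne1]
          exact ⟨fun h => hxE.1 (h.symm ▸ Finset.mem_image_of_mem c1 h1),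
            fun h => hyE.1.1 (h.symm ▸ Finset.mem_image_of_mem c1 h1),
            fun h => hxE.2 (h.symm ▸ Finset.mem_image_of_mem c3 h1),
            fun h => hyE.1.2 (h.symm ▸ Finset.mem_image_of_mem c3 h1)⟩
        · have hne1 : p ≠ i := fun he => hiA (he ▸ h1)
          have hne2 : q ≠ i := fun he => hiA (he ▸ h2)
          rw [Function.update_of_ne hne1, Function.update_of_ne hne1,
            Function.update_of_ne hne2, Function.update_of_ne hne2]
          exact hdisj p h1 q h2 hpq
  exact main J (le_refl J : J ⊆ J)

lemma hallC {V : Type} [Fintype V] [DecidableEq V] [Nonempty V] (H : SimpleGraph V)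
    [DecidableRel H.Adj] {k : ℕ} (J : Finset (Fin k)) (L₂ : Finset V) (c1 c3 : Fin k → V)
    (b : ℕ) (hb : 0 < b) (hL : J.card ≤ L₂.card) (hJb : 9 * b ≤ J.card)
    (hrel1 : ∀ i ∈ J, L₂.card ≤
      (L₂.filter fun v => H.Adj (c1 i) v ∧ H.Adj (c3 i) v).card + 4 * b)
    (hrel2 : ∀ v ∈ L₂,
      (J.filter fun i => ¬(H.Adj (c1 i) v ∧ H.Adj (c3 i) v)).card ≤ 4 * b) :
    ∃ mid : Fin k → V, Set.InjOn mid ↑J ∧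
      ∀ i ∈ J, mid i ∈ L₂ ∧ H.Adj (c1 i) (mid i) ∧ H.Adj (c3 i) (mid i) := by
  set rel : Fin k → Finset V := fun i => L₂.filter fun v => H.Adj (c1 i) v ∧ H.Adj (c3 i) v
    with hrel
  have hall : ∀ s : Finset {i // i ∈ J}, s.card ≤ (s.biUnion fun i => rel i.1).card := by
    intro s
    rcases Finset.eq_empty_or_nonempty s with hse | ⟨i₀, hi₀⟩
    · simp [hse]
    have hsJ : s.card ≤ J.card := by
      calc s.card ≤ Fintype.card {i // i ∈ J} := Finset.card_le_univ s
        _ = J.card := Fintype.card_coe J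
    have hsub0 : rel i₀.1 ⊆ s.biUnion fun i => rel i.1 := by
      intro v hv
      exact Finset.mem_biUnion.mpr ⟨i₀, hi₀, hv⟩
    by_cases hcase : s.card + 4 * b ≤ L₂.card
    · have h1 := hrel1 i₀.1 i₀.2
      have h2 := Finset.card_le_card hsub0
      have h3 : rel i₀.1 = L₂.filter fun v => H.Adj (c1 i₀.1) v ∧ H.Adj (c3 i₀.1) v := rfl
      rw [h3] at h2
      omega
    · -- s is large; every v ∈ L₂ is covered
      have hcover : L₂ ⊆ s.biUnion fun i => rel i.1 := by
        intro v hv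
        by_contra hnc
        have hall_bad : ∀ i ∈ s, ¬(H.Adj (c1 i.1) v ∧ H.Adj (c3 i.1) v) := by
          intro i hi hadj
          exact hnc (Finset.mem_biUnion.mpr ⟨i, hi,
            Finset.mem_filter.mpr ⟨hv, hadj⟩⟩)
        have hmap : s.image (fun i => i.1) ⊆
            J.filter fun i => ¬(H.Adj (c1 i) v ∧ H.Adj (c3 i) v) := by
          intro j hj
          obtain ⟨i, hi, hij⟩ := Finset.mem_image.mp hj
          exact Finset.mem_filter.mpr ⟨hij ▸ i.2, hij ▸ hall_bad i hi⟩
        have hcard : s.card = (s.image (fun i => i.1)).card :=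
          (Finset.card_image_of_injective s Subtype.val_injective).symm
        have := Finset.card_le_card hmap
        have := hrel2 v hv
        omega
      have := Finset.card_le_card hcover
      omega
  obtain ⟨g, hginj, hgmem⟩ :=
    (Finset.all_card_le_biUnion_card_iff_exists_injective (fun i : {i // i ∈ J} => rel i.1)).mp
      hall
  refine ⟨fun i => if h : i ∈ J then g ⟨i, h⟩ else Classical.arbitrary V, ?_, ?_⟩
  · intro x hx y hy hxy
    have hxJ : x ∈ J := by exact_mod_cast hx
    have hyJ : y ∈ J := by exact_mod_cast hy
    dsimp only at hxy
    rw [dif_pos hxJ, dif_pos hyJ] at hxy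
    have := hginj hxy
    exact congrArg Subtype.val this
  · intro i hiJ
    dsimp only
    rw [dif_pos hiJ]
    have := hgmem ⟨i, hiJ⟩
    rw [hrel, Finset.mem_filter] at this
    exact ⟨this.1, this.2.1, this.2.2⟩


variable {n : ℕ} {T : SimpleGraph (Fin n)} {p : Fin 5 → Fin n}

lemma bp_adj (h : IsBarePath4 T p) :
    T.Adj (p 0) (p 1) ∧ T.Adj (p 1) (p 2) ∧ T.Adj (p 2) (p 3) ∧ T.Adj (p 3) (p 4) := by
  have key : ∀ (i : Fin 4) (x y : Fin 5), i.castSucc = x → i.succ = y → T.Adj (p x) (p y) :=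
    fun i x y hx hy => hx ▸ hy ▸ h.2.1 i
  exact ⟨key 0 0 1 (by decide) (by decide), key 1 1 2 (by decide) (by decide),
    key 2 2 3 (by decide) (by decide), key 3 3 4 (by decide) (by decide)⟩

lemma two_nbrs {x a c : Fin n} (ha : T.Adj x a) (hc : T.Adj x c) (hac : a ≠ c)
    (hcard : (T.neighborSet x).ncard = 2) : ∀ z, T.Adj x z → z = a ∨ z = c := by
  obtain ⟨s, s', hss, hset⟩ := Set.ncard_eq_two.mp hcard
  have hma : a ∈ ({s, s'} : Set (Fin n)) := hset ▸ ha
  have hmc : c ∈ ({s, s'} : Set (Fin n)) := hset ▸ hc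
  intro z hz
  have hmz : z ∈ ({s, s'} : Set (Fin n)) := hset ▸ hz
  simp only [Set.mem_insert_iff, Set.mem_singleton_iff] at hma hmc hmz
  rcases hma with h1 | h1 <;> rcases hmc with h2 | h2 <;> rcases hmz with h3 | h3 <;>
    first
      | (left; rw [h3, ← h1])
      | (right; rw [h3, ← h2])
      | (exfalso; exact hac (h1.trans h2.symm))

lemma bp_nbr1 (h : IsBarePath4 T p) : ∀ z, T.Adj (p 1) z → z = p 0 ∨ z = p 2 := by
  obtain ⟨a0, a1, _, _⟩ := bp_adj h
  exact two_nbrs a0.symm a1 (fun he => by exact absurd (h.1 he) (by decide))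
    (h.2.2 1 (by decide) (by decide))

lemma bp_nbr2 (h : IsBarePath4 T p) : ∀ z, T.Adj (p 2) z → z = p 1 ∨ z = p 3 := by
  obtain ⟨_, a1, a2, _⟩ := bp_adj h
  exact two_nbrs a1.symm a2 (fun he => by exact absurd (h.1 he) (by decide))
    (h.2.2 2 (by decide) (by decide))

lemma bp_nbr3 (h : IsBarePath4 T p) : ∀ z, T.Adj (p 3) z → z = p 2 ∨ z = p 4 := by
  obtain ⟨_, _, a2, a3⟩ := bp_adj h
  exact two_nbrs a2.symm a3 (fun he => by exact absurd (h.1 he) (by decide))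
    (h.2.2 3 (by decide) (by decide))

set_option maxHeartbeats 1000000 in
lemma core {V : Type} [Fintype V] [DecidableEq V] (H : SimpleGraph V) [DecidableRel H.Adj]
    {n b k : ℕ} (hb : 10 ≤ b) (hn : n ≤ Fintype.card V)
    (hdeg : ∀ v, 100 * b ≤ H.degree v)
    (W' : Finset V) (hW : W'.card ≤ b)
    (hgood : ∀ v, v ∉ W' → Fintype.card V ≤ H.degree v + 2 * b)
    {T : SimpleGraph (Fin n)} [DecidableRel T.Adj] (hT : T.IsTree)
    (hDel : ∀ v, T.degree v ≤ b)
    (P : Fin k → Fin 5 → Fin n) (hk : 10 * b ≤ k)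
    (hbp : ∀ i, IsBarePath4 T (P i))
    (hdisjP : ∀ i j, i ≠ j → ∀ a c, P i a ≠ P j c)
    (t : Fin n) (ht : ∀ i a, P i a ≠ t) (u : V) :
    ∃ f : Fin n → V, Function.Injective f ∧
      (∀ ⦃x y : Fin n⦄, T.Adj x y → H.Adj (f x) (f y)) ∧ f t = u := by
  have hn1 : 1 ≤ n := by
    have hne : Nonempty (Fin n) := hT.isConnected.nonempty
    have := Fintype.card_pos_iff.mpr hne
    simp at this; omega
  have hNV : Nonempty V := Fintype.card_pos_iff.mp (by omega)
  have hk0 : 0 < k := by omega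
  have hn5k : 5 * k ≤ n := by
    have hinj : Function.Injective (fun q : Fin k × Fin 5 => P q.1 q.2) := by
      intro ⟨i, a⟩ ⟨j, c⟩ h
      simp only at h
      by_cases hij : i = j
      · subst hij
        exact Prod.ext rfl ((hbp i).1 h)
      · exact absurd h (hdisjP i j hij a c)
    have := Fintype.card_le_of_injective _ hinj
    simpa [mul_comm] using this
  -- interior vertices
  set em3 : Fin 3 → Fin 5 := ![1, 2, 3] with hem3
  set pm : Fin k × Fin 3 → Fin n := fun q => P q.1 (em3 q.2) with hpm
  have hem3inj : Function.Injective em3 := by decide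
  have hpminj : Function.Injective pm := by
    intro ⟨i, a⟩ ⟨j, c⟩ h
    simp only [hpm] at h
    by_cases hij : i = j
    · subst hij
      exact Prod.ext rfl (hem3inj ((hbp i).1 h))
    · exact absurd h (hdisjP i j hij _ _)
  set I : Finset (Fin n) := Finset.univ.image pm with hI
  have hIcard : I.card = 3 * k := by
    rw [hI, Finset.card_image_of_injective _ hpminj, Finset.card_univ]
    simp [mul_comm]
  have hmemI : ∀ x, x ∈ I ↔ ∃ i, x = P i 1 ∨ x = P i 2 ∨ x = P i 3 := by
    intro x
    rw [hI]
    simp only [Finset.mem_image, Finset.mem_univ, true_and]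
    constructor
    · rintro ⟨⟨i, j⟩, hj⟩
      refine ⟨i, ?_⟩
      fin_cases j
      · left; rw [← hj]; rfl
      · right; left; rw [← hj]; rfl
      · right; right; rw [← hj]; rfl
    · rintro ⟨i, h | h | h⟩
      · exact ⟨⟨i, 0⟩, h.symm⟩
      · exact ⟨⟨i, 1⟩, h.symm⟩
      · exact ⟨⟨i, 2⟩, h.symm⟩
  set D : Finset (Fin n) := Finset.univ \ I with hD
  have hIsub : I ⊆ Finset.univ := Finset.subset_univ I
  have hDcard : D.card = n - 3 * k := by
    rw [hD, Finset.card_sdiff_of_subset hIsub, Finset.card_univ, Fintype.card_fin, hIcard]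
  have hmemD : ∀ x, x ∈ D ↔ ¬∃ i, x = P i 1 ∨ x = P i 2 ∨ x = P i 3 := by
    intro x
    rw [hD, Finset.mem_sdiff]
    simp [hmemI x]
  have htD : t ∈ D := by
    rw [hmemD]
    rintro ⟨i, h | h | h⟩ <;> exact ht i _ h.symm
  have hP0D : ∀ i, P i 0 ∈ D := by
    intro i
    rw [hmemD]
    rintro ⟨j, h | h | h⟩ <;>
    · by_cases hij : i = j
      · subst hij; exact absurd ((hbp i).1 h) (by decide)
      · exact hdisjP j i (fun he => hij he.symm) _ _ h.symm
  have hP4D : ∀ i, P i 4 ∈ D := by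
    intro i
    rw [hmemD]
    rintro ⟨j, h | h | h⟩ <;>
    · by_cases hij : i = j
      · subst hij; exact absurd ((hbp i).1 h) (by decide)
      · exact hdisjP j i (fun he => hij he.symm) _ _ h.symm
  -- parent function
  have hparex : ∀ v : Fin n, ∃ x, v ≠ t → T.Adj x v ∧ T.dist t x + 1 = T.dist t v := by
    intro v
    by_cases hv : v = t
    · exact ⟨t, fun h => absurd hv h⟩
    · obtain ⟨x, hx⟩ := tree_parent_exists hT t hv
      exact ⟨x, fun _ => hx⟩
  choose par hpar using hparex
  -- reservation
  obtain ⟨r1, r2, hres, hresdisj⟩ := reserve H W' u b hW (fun w _ => by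
    have := hdeg w; omega)
  set R' : Finset V := W'.biUnion (fun w => {r1 w, r2 w}) with hR'
  have hRcard : R'.card ≤ 2 * b := by
    calc R'.card ≤ ∑ w ∈ W', ({r1 w, r2 w} : Finset V).card := Finset.card_biUnion_le
      _ ≤ ∑ _w ∈ W', 2 := Finset.sum_le_sum (fun w _ => le_trans (Finset.card_insert_le _ _) (by simp))
      _ = 2 * W'.card := by rw [Finset.sum_const, smul_eq_mul, mul_comm]
      _ ≤ 2 * b := by omega
  set X : Finset V := W' ∪ R' with hX
  have hXcard : X.card ≤ 3 * b := by
    have h := Finset.card_union_le W' R'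
    rw [← hX] at h
    omega
  -- phase 1
  obtain ⟨f1, hf1inj, hf1t, hf1avoid, hf1adj⟩ := phase1 H hT t par hpar D htD X u
    (by have := hdeg u; have := hDel t; omega)
    (by
      intro v hvX hvu
      have hvW : v ∉ W' := fun h => hvX (Finset.mem_union_left _ h)
      have := hgood v hvW
      omega)
    (by omega)
  -- path endpoints images
  set aE : Fin k → V := fun i => f1 (P i 0) with haE
  set bE : Fin k → V := fun i => f1 (P i 4) with hbE
  have haEgood : ∀ i, aE i ∉ W' ∧ aE i ∉ R' ∧ aE i ≠ u := by
    intro i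
    have h := hf1avoid (P i 0) (hP0D i) (ht i 0)
    rw [hX] at h
    simp only [Finset.mem_union, not_or] at h
    exact ⟨h.1.1, h.1.2, h.2⟩
  have hbEgood : ∀ i, bE i ∉ W' ∧ bE i ∉ R' ∧ bE i ≠ u := by
    intro i
    have h := hf1avoid (P i 4) (hP4D i) (ht i 4)
    rw [hX] at h
    simp only [Finset.mem_union, not_or] at h
    exact ⟨h.1.1, h.1.2, h.2⟩
  have haEinj : Set.InjOn aE ↑(Finset.univ : Finset (Fin k)) := by
    intro i _ j _ hij
    by_contra hne
    have := hf1inj (by exact_mod_cast hP0D i) (by exact_mod_cast hP0D j) hij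
    exact hdisjP i j hne 0 0 this
  have hbEinj : Set.InjOn bE ↑(Finset.univ : Finset (Fin k)) := by
    intro i _ j _ hij
    by_contra hne
    have := hf1inj (by exact_mod_cast hP4D i) (by exact_mod_cast hP4D j) hij
    exact hdisjP i j hne 4 4 this
  -- leftover vertices
  set imgD : Finset V := D.image f1 with himgD
  have himgDcard : imgD.card = n - 3 * k := by
    rw [himgD, Finset.card_image_of_injOn hf1inj, hDcard]
  set B : Finset V := W' \ imgD with hB
  have hBcard : B.card ≤ b := le_trans (Finset.card_le_card (Finset.sdiff_subset)) hW
  -- assign bad vertices to paths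
  have hnonadj_bound : ∀ w, w ∉ W' → Fintype.card V - H.degree w ≤ 2 * b := by
    intro w hw
    have := hgood w hw
    omega
  obtain ⟨g, hginj, hgbad⟩ := assignA hk0 B
    (fun w => Finset.univ.filter fun i => ¬H.Adj (r1 w) (aE i) ∨ ¬H.Adj (r2 w) (bE i))
    (by
      intro w hwB
      have hwW : w ∈ W' := (Finset.mem_sdiff.mp hwB).1
      have e1 : (Finset.univ.filter fun i => ¬H.Adj (r1 w) (aE i) ∨ ¬H.Adj (r2 w) (bE i))
          ⊆ (Finset.univ.filter fun i => ¬H.Adj (r1 w) (aE i)) ∪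
            (Finset.univ.filter fun i => ¬H.Adj (r2 w) (bE i)) := by
        intro i hi
        rw [Finset.mem_filter] at hi
        rcases hi.2 with h | h
        · exact Finset.mem_union_left _ (Finset.mem_filter.mpr ⟨hi.1, h⟩)
        · exact Finset.mem_union_right _ (Finset.mem_filter.mpr ⟨hi.1, h⟩)
      have e2 := count_nonadj H aE haEinj (r1 w)
      have e3 := count_nonadj H bE hbEinj (r2 w)
      have e4 := hnonadj_bound (r1 w) (hres w hwW).2.2.1
      have e5 := hnonadj_bound (r2 w) (hres w hwW).2.2.2.1
      have e6 := Finset.card_le_card e1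
      have e7 := Finset.card_union_le
        (Finset.univ.filter fun i => ¬H.Adj (r1 w) (aE i))
        (Finset.univ.filter fun i => ¬H.Adj (r2 w) (bE i))
      omega)
  have hgadj : ∀ w ∈ B, H.Adj (r1 w) (aE (g w)) ∧ H.Adj (r2 w) (bE (g w)) := by
    intro w hwB
    have := hgbad w hwB
    rw [Finset.mem_filter] at this
    push_neg at this
    exact this (Finset.mem_univ _)
  -- remaining paths and vertices
  set J : Finset (Fin k) := Finset.univ \ B.image g with hJ
  have hJcard : J.card = k - B.card := by
    rw [hJ, Finset.card_sdiff_of_subset (Finset.subset_univ _), Finset.card_univ, Fintype.card_fin,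
      Finset.card_image_of_injOn hginj]
  have hJge : 9 * b ≤ J.card := by omega
  set RB : Finset V := B.biUnion (fun w => {r1 w, r2 w}) with hRB
  have hRBcard : RB.card ≤ 2 * B.card := by
    calc RB.card ≤ ∑ w ∈ B, ({r1 w, r2 w} : Finset V).card := Finset.card_biUnion_le
      _ ≤ ∑ _w ∈ B, 2 := Finset.sum_le_sum
          (fun w _ => le_trans (Finset.card_insert_le _ _) (by simp))
      _ = 2 * B.card := by rw [Finset.sum_const, smul_eq_mul, mul_comm]
  set U₁ : Finset V := (Finset.univ \ imgD) \ (B ∪ RB) with hU₁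
  have hU₁W : ∀ v ∈ U₁, v ∉ W' := by
    intro v hv
    rw [hU₁] at hv
    simp only [Finset.mem_sdiff, Finset.mem_univ, true_and, Finset.mem_union, not_or] at hv
    intro hvW
    exact hv.2.1 (Finset.mem_sdiff.mpr ⟨hvW, hv.1⟩)
  have hU₁card : 3 * J.card ≤ U₁.card := by
    have e1 : (Finset.univ \ imgD).card = Fintype.card V - (n - 3 * k) := by
      rw [Finset.card_sdiff_of_subset (Finset.subset_univ _), Finset.card_univ, himgDcard]
    have e2 := Finset.le_card_sdiff (B ∪ RB) (Finset.univ \ imgD)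
    rw [← hU₁] at e2
    have e3 := Finset.card_union_le B RB
    omega
  have hgoodbound : ∀ v, v ∉ W' → ∀ (S : Finset V),
      S.card - 2 * b ≤ (S ∩ H.neighborFinset v).card := by
    intro v hv S
    have e1 : S \ (Finset.univ \ H.neighborFinset v) ⊆ S ∩ H.neighborFinset v := by
      intro z hz
      simp only [Finset.mem_sdiff, Finset.mem_univ, true_and, not_not] at hz
      exact Finset.mem_inter.mpr ⟨hz.1, hz.2⟩
    have e2 := Finset.le_card_sdiff (Finset.univ \ H.neighborFinset v) S
    have e3 : (Finset.univ \ H.neighborFinset v).card = Fintype.card V - H.degree v := by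
      rw [Finset.card_sdiff_of_subset (Finset.subset_univ _), Finset.card_univ,
        SimpleGraph.card_neighborFinset_eq_degree]
    have e4 := hnonadj_bound v hv
    have e5 := Finset.card_le_card e1
    omega
  -- step B: choose the path neighbours of the endpoints
  obtain ⟨c1, c3, hc13, hc13disj⟩ := stepB H J U₁ aE bE (by
    intro i hi
    constructor
    · have := hgoodbound (aE i) (haEgood i).1 U₁
      omega
    · have := hgoodbound (bE i) (hbEgood i).1 U₁
      omega)
  have hc1W : ∀ i ∈ J, c1 i ∉ W' := fun i hi => hU₁W _ (hc13 i hi).1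
  have hc3W : ∀ i ∈ J, c3 i ∉ W' := fun i hi => hU₁W _ (hc13 i hi).2.1
  have hc1inj : Set.InjOn c1 ↑J := by
    intro i hi j hj hij
    by_contra hne
    exact (hc13disj i (by exact_mod_cast hi) j (by exact_mod_cast hj) hne).1 hij
  have hc3inj : Set.InjOn c3 ↑J := by
    intro i hi j hj hij
    by_contra hne
    exact (hc13disj i (by exact_mod_cast hi) j (by exact_mod_cast hj) hne).2.2.2 hij
  -- the middles, by Hall's theorem
  set L₂ : Finset V := U₁ \ (J.biUnion fun i => {c1 i, c3 i}) with hL₂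
  have hL₂sub : L₂ ⊆ U₁ := Finset.sdiff_subset
  have hL₂card : J.card ≤ L₂.card := by
    have e1 := Finset.le_card_sdiff (J.biUnion fun i => {c1 i, c3 i}) U₁
    rw [← hL₂] at e1
    have e2 : (J.biUnion fun i => {c1 i, c3 i}).card ≤ 2 * J.card := by
      calc (J.biUnion fun i => {c1 i, c3 i}).card
          ≤ ∑ i ∈ J, ({c1 i, c3 i} : Finset V).card := Finset.card_biUnion_le
        _ ≤ ∑ _i ∈ J, 2 := Finset.sum_le_sum
            (fun i _ => le_trans (Finset.card_insert_le _ _) (by simp))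
        _ = 2 * J.card := by rw [Finset.sum_const, smul_eq_mul, mul_comm]
    omega
  obtain ⟨mid, hmidinj, hmid⟩ := hallC H J L₂ c1 c3 b (by omega) hL₂card hJge
    (by
      intro i hi
      have e1 : L₂ \ (L₂.filter fun v => H.Adj (c1 i) v ∧ H.Adj (c3 i) v) ⊆
          (Finset.univ \ H.neighborFinset (c1 i)) ∪ (Finset.univ \ H.neighborFinset (c3 i)) := by
        intro v hv
        simp only [Finset.mem_sdiff, Finset.mem_filter, Finset.mem_union, Finset.mem_univ,
          true_and, SimpleGraph.mem_neighborFinset, not_and] at hv ⊢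
        by_cases h1 : H.Adj (c1 i) v
        · exact Or.inr (hv.2 hv.1 h1)
        · exact Or.inl h1
      have e2 := Finset.card_le_card e1
      have e3 := Finset.card_union_le (Finset.univ \ H.neighborFinset (c1 i))
        (Finset.univ \ H.neighborFinset (c3 i))
      have e4 : (Finset.univ \ H.neighborFinset (c1 i)).card = Fintype.card V - H.degree (c1 i) := by
        rw [Finset.card_sdiff_of_subset (Finset.subset_univ _), Finset.card_univ,
          SimpleGraph.card_neighborFinset_eq_degree]
      have e5 : (Finset.univ \ H.neighborFinset (c3 i)).card = Fintype.card V - H.degree (c3 i) := by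
        rw [Finset.card_sdiff_of_subset (Finset.subset_univ _), Finset.card_univ,
          SimpleGraph.card_neighborFinset_eq_degree]
      have e6 := hnonadj_bound (c1 i) (hc1W i hi)
      have e7 := hnonadj_bound (c3 i) (hc3W i hi)
      have e8 := Finset.card_sdiff_add_card_eq_card
        (Finset.filter_subset (fun v => H.Adj (c1 i) v ∧ H.Adj (c3 i) v) L₂)
      omega)
    (by
      intro v hv
      have hvW : v ∉ W' := hU₁W v (hL₂sub hv)
      have e1 : (J.filter fun i => ¬(H.Adj (c1 i) v ∧ H.Adj (c3 i) v)) ⊆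
          (J.filter fun i => ¬H.Adj v (c1 i)) ∪ (J.filter fun i => ¬H.Adj v (c3 i)) := by
        intro i hi
        simp only [Finset.mem_filter, Finset.mem_union, not_and] at hi ⊢
        by_cases h1 : H.Adj (c1 i) v
        · exact Or.inr ⟨hi.1, fun h => (hi.2 h1) h.symm⟩
        · exact Or.inl ⟨hi.1, fun h => h1 h.symm⟩
      have e2 := Finset.card_le_card e1
      have e3 := Finset.card_union_le (J.filter fun i => ¬H.Adj v (c1 i))
        (J.filter fun i => ¬H.Adj v (c3 i))
      have e4 := count_nonadj H c1 hc1inj v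
      have e5 := count_nonadj H c3 hc3inj v
      have e6 := hnonadj_bound v hvW
      omega)
  -- small helper facts
  have hU₁facts : ∀ v ∈ U₁, v ∉ imgD ∧ v ∉ B ∧ v ∉ RB := by
    intro v hv
    rw [hU₁] at hv
    simp only [Finset.mem_sdiff, Finset.mem_univ, true_and, Finset.mem_union, not_or] at hv
    exact ⟨hv.1, hv.2.1, hv.2.2⟩
  have hRBmem : ∀ w ∈ B, r1 w ∈ RB ∧ r2 w ∈ RB := by
    intro w hw
    constructor <;> exact Finset.mem_biUnion.mpr ⟨w, hw, by simp⟩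
  have hR'mem : ∀ w ∈ W', r1 w ∈ R' ∧ r2 w ∈ R' := by
    intro w hw
    constructor <;> exact Finset.mem_biUnion.mpr ⟨w, hw, by simp⟩
  have huR : u ∉ R' := by
    intro hu
    obtain ⟨w, hw, hmem⟩ := Finset.mem_biUnion.mp hu
    simp only [Finset.mem_insert, Finset.mem_singleton] at hmem
    rcases hmem with h | h
    · exact (hres w hw).2.2.2.2.1 h.symm
    · exact (hres w hw).2.2.2.2.2.1 h.symm
  have hRnotimg : ∀ v ∈ R', v ∉ imgD := by
    intro v hvR hvimg
    obtain ⟨x, hxD, hxv⟩ := Finset.mem_image.mp hvimg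
    by_cases hxt : x = t
    · subst hxt
      rw [hf1t] at hxv
      exact huR (hxv ▸ hvR)
    · have := (hf1avoid x hxD hxt).1
      rw [hX] at this
      simp only [Finset.mem_union, not_or] at this
      exact this.2 (hxv ▸ hvR)
  have hBnotimg : ∀ v ∈ B, v ∉ imgD := by
    intro v hv
    exact (Finset.mem_sdiff.mp hv).2
  -- the triple of images for each path
  set d1 : Fin k → V := fun i => if h : ∃ w, w ∈ B ∧ g w = i then r1 h.choose else c1 i with hd1
  set d2 : Fin k → V := fun i => if h : ∃ w, w ∈ B ∧ g w = i then h.choose else mid i with hd2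
  set d3 : Fin k → V := fun i => if h : ∃ w, w ∈ B ∧ g w = i then r2 h.choose else c3 i with hd3
  have hdB : ∀ w ∈ B, d1 (g w) = r1 w ∧ d2 (g w) = w ∧ d3 (g w) = r2 w := by
    intro w hwB
    have hQ : ∃ w', w' ∈ B ∧ g w' = g w := ⟨w, hwB, rfl⟩
    have hch : hQ.choose = w := by
      have hspec := hQ.choose_spec
      exact hginj (by exact_mod_cast hspec.1) (by exact_mod_cast hwB) hspec.2
    refine ⟨?_, ?_, ?_⟩
    · rw [hd1]; dsimp only; rw [dif_pos hQ, hch]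
    · rw [hd2]; dsimp only; rw [dif_pos hQ, hch]
    · rw [hd3]; dsimp only; rw [dif_pos hQ, hch]
  have hJnotB : ∀ i ∈ J, ¬∃ w, w ∈ B ∧ g w = i := by
    intro i hi ⟨w, hwB, hgw⟩
    rw [hJ, Finset.mem_sdiff] at hi
    exact hi.2 (Finset.mem_image.mpr ⟨w, hwB, hgw⟩)
  have hdJ : ∀ i ∈ J, d1 i = c1 i ∧ d2 i = mid i ∧ d3 i = c3 i := by
    intro i hi
    refine ⟨?_, ?_, ?_⟩
    · rw [hd1]; dsimp only; rw [dif_neg (hJnotB i hi)]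
    · rw [hd2]; dsimp only; rw [dif_neg (hJnotB i hi)]
    · rw [hd3]; dsimp only; rw [dif_neg (hJnotB i hi)]
  have hcover : ∀ i : Fin k, i ∈ J ∨ ∃ w, w ∈ B ∧ g w = i := by
    intro i
    by_cases hi : i ∈ B.image g
    · obtain ⟨w, hw, hgw⟩ := Finset.mem_image.mp hi
      exact Or.inr ⟨w, hw, hgw⟩
    · exact Or.inl (by rw [hJ, Finset.mem_sdiff]; exact ⟨Finset.mem_univ _, hi⟩)
  clear_value d1 d2 d3
  clear hd1 hd2 hd3
  have hmidnot : ∀ i ∈ J, ∀ j ∈ J, mid i ≠ c1 j ∧ mid i ≠ c3 j := by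
    intro i hi j hj
    have hm : mid i ∈ L₂ := (hmid i hi).1
    rw [hL₂, Finset.mem_sdiff] at hm
    have := hm.2
    constructor <;> intro he <;> exact this (Finset.mem_biUnion.mpr ⟨j, hj, by simp [he]⟩)
  -- per-path adjacency
  have hpath : ∀ i : Fin k, H.Adj (aE i) (d1 i) ∧ H.Adj (d1 i) (d2 i) ∧
      H.Adj (d2 i) (d3 i) ∧ H.Adj (d3 i) (bE i) := by
    intro i
    rcases hcover i with hiJ | ⟨w, hwB, hgw⟩
    · obtain ⟨e1, e2, e3⟩ := hdJ i hiJ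
      rw [e1, e2, e3]
      exact ⟨(hc13 i hiJ).2.2.1, (hmid i hiJ).2.1, (hmid i hiJ).2.2.symm,
        (hc13 i hiJ).2.2.2.1.symm⟩
    · subst hgw
      obtain ⟨e1, e2, e3⟩ := hdB w hwB
      rw [e1, e2, e3]
      have hwW : w ∈ W' := (Finset.mem_sdiff.mp hwB).1
      exact ⟨(hgadj w hwB).1.symm, (hres w hwW).1.symm, (hres w hwW).2.1,
        (hgadj w hwB).2⟩
  -- triples avoid the phase-1 image
  have hnotimg : ∀ i : Fin k, d1 i ∉ imgD ∧ d2 i ∉ imgD ∧ d3 i ∉ imgD := by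
    intro i
    rcases hcover i with hiJ | ⟨w, hwB, hgw⟩
    · obtain ⟨e1, e2, e3⟩ := hdJ i hiJ
      rw [e1, e2, e3]
      exact ⟨(hU₁facts _ (hc13 i hiJ).1).1,
        (hU₁facts _ (hL₂sub (hmid i hiJ).1)).1,
        (hU₁facts _ (hc13 i hiJ).2.1).1⟩
    · subst hgw
      obtain ⟨e1, e2, e3⟩ := hdB w hwB
      rw [e1, e2, e3]
      have hwW : w ∈ W' := (Finset.mem_sdiff.mp hwB).1
      exact ⟨hRnotimg _ (hR'mem w hwW).1, hBnotimg w hwB, hRnotimg _ (hR'mem w hwW).2⟩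
  -- triples pairwise distinct within a path
  have hd_within : ∀ i : Fin k, d1 i ≠ d2 i ∧ d1 i ≠ d3 i ∧ d2 i ≠ d3 i := by
    intro i
    rcases hcover i with hiJ | ⟨w, hwB, hgw⟩
    · obtain ⟨e1, e2, e3⟩ := hdJ i hiJ
      rw [e1, e2, e3]
      exact ⟨fun h => (hmidnot i hiJ i hiJ).1 h.symm, (hc13 i hiJ).2.2.2.2,
        (hmidnot i hiJ i hiJ).2⟩
    · subst hgw
      obtain ⟨e1, e2, e3⟩ := hdB w hwB
      rw [e1, e2, e3]
      have hwW : w ∈ W' := (Finset.mem_sdiff.mp hwB).1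
      exact ⟨fun h => (hres w hwW).2.2.1 (by rw [h]; exact hwW), (hres w hwW).2.2.2.2.2.2,
        fun h => (hres w hwW).2.2.2.1 (by rw [← h]; exact hwW)⟩
  -- triples of distinct paths are disjoint
  have hsep : ∀ i j : Fin k, i ≠ j →
      ∀ x, (x = d1 i ∨ x = d2 i ∨ x = d3 i) → (x = d1 j ∨ x = d2 j ∨ x = d3 j) → False := by
    intro i j hij x hxi hxj
    rcases hcover i with hiJ | ⟨w, hwB, hgw⟩ <;> rcases hcover j with hjJ | ⟨w', hwB', hgw'⟩
    · -- both in J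
      obtain ⟨e1, e2, e3⟩ := hdJ i hiJ
      obtain ⟨f1', f2', f3'⟩ := hdJ j hjJ
      rw [e1, e2, e3] at hxi
      rw [f1', f2', f3'] at hxj
      have hdisj := hc13disj i (by rw [hJ] at hiJ ⊢; exact hiJ) j hjJ hij
      rcases hxi with h | h | h <;> rcases hxj with h' | h' | h'
      · exact hdisj.1 (h.symm.trans h')
      · exact (hmidnot j hjJ i hiJ).1 (h'.symm.trans h)
      · exact hdisj.2.1 (h.symm.trans h')
      · exact (hmidnot i hiJ j hjJ).1 (h.symm.trans h')
      · exact hij (hmidinj (by exact_mod_cast hiJ) (by exact_mod_cast hjJ) (h.symm.trans h'))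
      · exact (hmidnot i hiJ j hjJ).2 (h.symm.trans h')
      · exact hdisj.2.2.1 (h.symm.trans h')
      · exact (hmidnot j hjJ i hiJ).2 (h'.symm.trans h)
      · exact hdisj.2.2.2 (h.symm.trans h')
    · -- i ∈ J, j from B
      subst hgw'
      obtain ⟨e1, e2, e3⟩ := hdJ i hiJ
      obtain ⟨f1', f2', f3'⟩ := hdB w' hwB'
      rw [e1, e2, e3] at hxi
      rw [f1', f2', f3'] at hxj
      have hxU : x ∈ U₁ := by
        rcases hxi with h | h | h
        · exact h ▸ (hc13 i hiJ).1
        · exact h ▸ hL₂sub (hmid i hiJ).1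
        · exact h ▸ (hc13 i hiJ).2.1
      have hfacts := hU₁facts x hxU
      rcases hxj with h' | h' | h'
      · exact hfacts.2.2 (h' ▸ (hRBmem w' hwB').1)
      · exact hfacts.2.1 (h' ▸ hwB')
      · exact hfacts.2.2 (h' ▸ (hRBmem w' hwB').2)
    · -- i from B, j ∈ J
      subst hgw
      obtain ⟨e1, e2, e3⟩ := hdB w hwB
      obtain ⟨f1', f2', f3'⟩ := hdJ j hjJ
      rw [e1, e2, e3] at hxi
      rw [f1', f2', f3'] at hxj
      have hxU : x ∈ U₁ := by
        rcases hxj with h | h | h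
        · exact h ▸ (hc13 j hjJ).1
        · exact h ▸ hL₂sub (hmid j hjJ).1
        · exact h ▸ (hc13 j hjJ).2.1
      have hfacts := hU₁facts x hxU
      rcases hxi with h' | h' | h'
      · exact hfacts.2.2 (h' ▸ (hRBmem w hwB).1)
      · exact hfacts.2.1 (h' ▸ hwB)
      · exact hfacts.2.2 (h' ▸ (hRBmem w hwB).2)
    · -- both from B
      subst hgw; subst hgw'
      have hww' : w ≠ w' := fun he => hij (he ▸ rfl)
      obtain ⟨e1, e2, e3⟩ := hdB w hwB
      obtain ⟨f1', f2', f3'⟩ := hdB w' hwB'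
      rw [e1, e2, e3] at hxi
      rw [f1', f2', f3'] at hxj
      have hwW : w ∈ W' := (Finset.mem_sdiff.mp hwB).1
      have hwW' : w' ∈ W' := (Finset.mem_sdiff.mp hwB').1
      have hdisj := hresdisj w hwW w' hwW' hww'
      rcases hxi with h | h | h <;> rcases hxj with h' | h' | h'
      · exact hdisj.1 (h.symm.trans h')
      · exact (hres w hwW).2.2.1 (by rw [h.symm.trans h']; exact hwW')
      · exact hdisj.2.1 (h.symm.trans h')
      · exact (hres w' hwW').2.2.1 (by rw [← h.symm.trans h']; exact hwW)
      · exact hww' (h.symm.trans h')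
      · exact (hres w' hwW').2.2.2.1 (by rw [← h.symm.trans h']; exact hwW)
      · exact hdisj.2.2.1 (h.symm.trans h')
      · exact (hres w hwW).2.2.2.1 (by rw [h.symm.trans h']; exact hwW')
      · exact hdisj.2.2.2 (h.symm.trans h')
  -- the interior-index function
  have hichex : ∀ x : Fin n, ∃ q : Fin k × Fin 3, x ∉ D → pm q = x := by
    intro x
    by_cases hx : x ∈ D
    · exact ⟨(⟨0, hk0⟩, 0), fun h => absurd hx h⟩
    · have hxI : x ∈ I := by
        rw [hD, Finset.mem_sdiff] at hx
        push_neg at hx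
        exact hx (Finset.mem_univ x)
      obtain ⟨q, _, hq⟩ := Finset.mem_image.mp hxI
      exact ⟨q, fun _ => hq⟩
  choose ich hich using hichex
  set dfun : Fin k × Fin 3 → V := fun q => ![d1 q.1, d2 q.1, d3 q.1] q.2 with hdfun
  have heval : ∀ i : Fin k, dfun (i, 0) = d1 i ∧ dfun (i, 1) = d2 i ∧ dfun (i, 2) = d3 i :=
    fun i => ⟨rfl, rfl, rfl⟩
  set fF : Fin n → V := fun x => if x ∈ D then f1 x else dfun (ich x) with hfF
  have hfD : ∀ x ∈ D, fF x = f1 x := by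
    intro x hx
    rw [hfF]; dsimp only; rw [if_pos hx]
  have hfnD : ∀ x, x ∉ D → fF x = dfun (ich x) := by
    intro x hx
    rw [hfF]; dsimp only; rw [if_neg hx]
  have hj3 : ∀ j : Fin 3, j = 0 ∨ j = 1 ∨ j = 2 := by decide
  have hmemval : ∀ q : Fin k × Fin 3, dfun q = d1 q.1 ∨ dfun q = d2 q.1 ∨ dfun q = d3 q.1 := by
    rintro ⟨i, j⟩
    rcases hj3 j with h | h | h <;> subst h
    · left; exact (heval i).1
    · right; left; exact (heval i).2.1
    · right; right; exact (heval i).2.2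
  have hpmnotD : ∀ q : Fin k × Fin 3, pm q ∉ D := by
    intro q
    rw [hD, Finset.mem_sdiff]
    rintro ⟨-, hq⟩
    exact hq (Finset.mem_image.mpr ⟨q, Finset.mem_univ q, rfl⟩)
  have hfI : ∀ q : Fin k × Fin 3, fF (pm q) = dfun q := by
    intro q
    rw [hfF]; dsimp only; rw [if_neg (hpmnotD q)]
    congr 1
    exact hpminj (hich (pm q) (hpmnotD q))
  have hfP1 : ∀ i, fF (P i 1) = d1 i := fun i => hfI (i, 0)
  have hfP2 : ∀ i, fF (P i 2) = d2 i := fun i => hfI (i, 1)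
  have hfP3 : ∀ i, fF (P i 3) = d3 i := fun i => hfI (i, 2)
  have hfP0 : ∀ i, fF (P i 0) = aE i := fun i => hfD _ (hP0D i)
  have hfP4 : ∀ i, fF (P i 4) = bE i := fun i => hfD _ (hP4D i)
  clear_value dfun fF
  clear hdfun hfF
  -- injectivity of dfun
  have hdfuninj : Function.Injective dfun := by
    rintro ⟨i, ji⟩ ⟨j, jj⟩ h
    by_cases hij : i = j
    · subst hij
      have hw := hd_within i
      obtain ⟨v1, v2, v3⟩ := heval i
      rcases hj3 ji with hji | hji | hji <;> subst hji <;>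
        rcases hj3 jj with hjj | hjj | hjj <;> subst hjj
      · rfl
      · rw [v1, v2] at h; exact absurd h hw.1
      · rw [v1, v3] at h; exact absurd h hw.2.1
      · rw [v2, v1] at h; exact absurd h.symm hw.1
      · rfl
      · rw [v2, v3] at h; exact absurd h hw.2.2
      · rw [v3, v1] at h; exact absurd h.symm hw.2.1
      · rw [v3, v2] at h; exact absurd h.symm hw.2.2
      · rfl
    · exfalso
      refine hsep i j hij (dfun (i, ji)) ?_ ?_
      · exact hmemval (i, ji)
      · rw [h]; exact hmemval (j, jj)
  -- injectivity of fF
  have hfFinj : Function.Injective fF := by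
    intro x y hxy
    by_cases hx : x ∈ D <;> by_cases hy : y ∈ D
    · rw [hfD x hx, hfD y hy] at hxy
      exact hf1inj (by exact_mod_cast hx) (by exact_mod_cast hy) hxy
    · exfalso
      rw [hfD x hx, hfnD y hy] at hxy
      have himg : f1 x ∈ imgD := Finset.mem_image.mpr ⟨x, hx, rfl⟩
      rcases hmemval (ich y) with h | h | h <;> rw [h] at hxy
      · exact (hnotimg (ich y).1).1 (hxy ▸ himg)
      · exact (hnotimg (ich y).1).2.1 (hxy ▸ himg)
      · exact (hnotimg (ich y).1).2.2 (hxy ▸ himg)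
    · exfalso
      rw [hfD y hy, hfnD x hx] at hxy
      have himg : f1 y ∈ imgD := Finset.mem_image.mpr ⟨y, hy, rfl⟩
      rcases hmemval (ich x) with h | h | h <;> rw [h] at hxy
      · exact (hnotimg (ich x).1).1 (hxy.symm ▸ himg)
      · exact (hnotimg (ich x).1).2.1 (hxy.symm ▸ himg)
      · exact (hnotimg (ich x).1).2.2 (hxy.symm ▸ himg)
    · rw [hfnD x hx, hfnD y hy] at hxy
      have := hdfuninj hxy
      rw [← hich x hx, ← hich y hy, this]
  -- adjacency
  have hadjI : ∀ x y : Fin n, T.Adj x y → x ∉ D → H.Adj (fF x) (fF y) := by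
    intro x y hadj hx
    have hxI : ∃ i, x = P i 1 ∨ x = P i 2 ∨ x = P i 3 := by
      have : x ∈ I := by
        rw [hD, Finset.mem_sdiff] at hx
        push_neg at hx
        exact hx (Finset.mem_univ x)
      exact (hmemI x).mp this
    obtain ⟨i, hx1 | hx2 | hx3⟩ := hxI
    · subst hx1
      rcases bp_nbr1 (hbp i) y hadj with hy | hy <;> subst hy
      · rw [hfP1, hfP0]
        exact (hpath i).1.symm
      · rw [hfP1, hfP2]
        exact (hpath i).2.1
    · subst hx2
      rcases bp_nbr2 (hbp i) y hadj with hy | hy <;> subst hy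
      · rw [hfP2, hfP1]
        exact (hpath i).2.1.symm
      · rw [hfP2, hfP3]
        exact (hpath i).2.2.1
    · subst hx3
      rcases bp_nbr3 (hbp i) y hadj with hy | hy <;> subst hy
      · rw [hfP3, hfP2]
        exact (hpath i).2.2.1.symm
      · rw [hfP3, hfP4]
        exact (hpath i).2.2.2
  refine ⟨fF, hfFinj, ?_, ?_⟩
  · intro x y hadj
    by_cases hx : x ∈ D
    · by_cases hy : y ∈ D
      · rw [hfD x hx, hfD y hy]
        exact hf1adj x hx y hy hadj
      · exact (hadjI y x hadj.symm hy).symm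
    · exact hadjI x y hadj hx
  · rw [hfD t htD]
    exact hf1t

theorem embed_tree_with_bare_paths (ξ : ℝ) (hξ0 : 0 < ξ) (hξ1 : ξ ≤ 1 / 100) :
    ∃ μ₀ : ℝ, 0 < μ₀ ∧ ∀ μ : ℝ, 0 < μ → μ ≤ μ₀ →
      ∃ n₀ : ℕ, ∀ n : ℕ, n₀ ≤ n →
        ∀ (V : Type) [Finite V] (H : SimpleGraph V),
          n ≤ Nat.card V →
          (∀ v : V, ξ * n ≤ ((H.neighborSet v).ncard : ℝ)) →
          (∃ W : Set V, (W.ncard : ℝ) ≤ μ * n ∧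
            ∀ v : V, v ∉ W → (Nat.card V : ℝ) - μ * n ≤ ((H.neighborSet v).ncard : ℝ)) →
          ∀ T : SimpleGraph (Fin n), T.IsTree → MaxDegLE T (μ * n) →
            ∀ (k : ℕ) (P : Fin k → Fin 5 → Fin n),
              10 * μ * n ≤ (k : ℝ) →
              (∀ i, IsBarePath4 T (P i)) →
              (∀ i j : Fin k, i ≠ j → ∀ a b : Fin 5, P i a ≠ P j b) →
              ∀ t : Fin n, (∀ i a, P i a ≠ t) →
                ∀ u : V, ∃ f : Fin n → V, Function.Injective f ∧
                  (∀ ⦃x y : Fin n⦄, T.Adj x y → H.Adj (f x) (f y)) ∧ f t = u := by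
  refine ⟨ξ / 1000, by positivity, ?_⟩
  intro μ hμ0 hμξ
  refine ⟨⌈(10:ℝ)/μ⌉₊, ?_⟩
  intro n hn V _ H hnV hdegξ ⟨W, hWcard, hWgood⟩ T hT hmax k P hkμ hbp hdisjP t ht u
  classical
  letI : Fintype V := Fintype.ofFinite V
  rw [Nat.card_eq_fintype_card] at hnV hWgood
  -- basic real facts
  have hμn10 : (10 : ℝ) ≤ μ * n := by
    have h1 : ((⌈(10:ℝ)/μ⌉₊ : ℝ)) ≤ (n : ℝ) := by exact_mod_cast hn
    have h2 : (10:ℝ)/μ ≤ (⌈(10:ℝ)/μ⌉₊ : ℝ) := Nat.le_ceil _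
    have h3 : (10:ℝ)/μ ≤ (n:ℝ) := le_trans h2 h1
    rw [div_le_iff₀ hμ0] at h3
    linarith [h3]
  set b : ℕ := ⌊μ * (n:ℝ)⌋₊ with hbdef
  have hμnpos : (0:ℝ) ≤ μ * n := by positivity
  have hble : (b : ℝ) ≤ μ * n := Nat.floor_le hμnpos
  have hblt : μ * (n:ℝ) < b + 1 := Nat.lt_floor_add_one _
  have hb : 10 ≤ b := Nat.le_floor (by exact_mod_cast hμn10)
  -- degree/ncard conversions
  have hdegeq : ∀ v : V, (H.neighborSet v).ncard = H.degree v := by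
    intro v
    rw [← SimpleGraph.card_neighborFinset_eq_degree, SimpleGraph.neighborFinset_def]
    exact Set.ncard_eq_toFinset_card' _
  have hdegeqT : ∀ v : Fin n, (T.neighborSet v).ncard = T.degree v := by
    intro v
    rw [← SimpleGraph.card_neighborFinset_eq_degree, SimpleGraph.neighborFinset_def]
    exact Set.ncard_eq_toFinset_card' _
  have hdeg : ∀ v : V, 100 * b ≤ H.degree v := by
    intro v
    have h1 := hdegξ v
    rw [hdegeq v] at h1
    have h2 : (100 * b : ℝ) ≤ ξ * n := by
      have : (100:ℝ) * b ≤ 100 * (μ * n) := by linarith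
      have h4 : 100 * (μ * (n:ℝ)) ≤ ξ * n := by
        have h5 : (100:ℝ) * μ ≤ ξ / 10 := by linarith
        have h6 : (0:ℝ) ≤ (n:ℝ) := Nat.cast_nonneg n
        nlinarith
      linarith
    exact_mod_cast le_trans h2 h1
  set W' : Finset V := W.toFinset with hW'def
  have hWcard' : W'.card ≤ b := by
    apply Nat.le_floor
    rw [hW'def, ← Set.ncard_eq_toFinset_card']
    exact hWcard
  have hgood : ∀ v, v ∉ W' → Fintype.card V ≤ H.degree v + 2 * b := by
    intro v hv
    rw [hW'def, Set.mem_toFinset] at hv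
    have h1 := hWgood v hv
    rw [hdegeq v] at h1
    have h2 : (Fintype.card V : ℝ) ≤ (H.degree v : ℝ) + 2 * b := by
      have : (μ : ℝ) * n ≤ 2 * b := by
        have : (10:ℝ) ≤ b := by exact_mod_cast hb
        linarith
      linarith
    exact_mod_cast h2
  have hDel : ∀ v : Fin n, T.degree v ≤ b := by
    intro v
    apply Nat.le_floor
    rw [← hdegeqT v]
    exact hmax v
  have hk : 10 * b ≤ k := by
    have h1 : (10 * b : ℝ) ≤ (k : ℝ) := by
      have : (10:ℝ) * b ≤ 10 * (μ * n) := by linarith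
      calc (10 * b : ℝ) ≤ 10 * (μ * n) := this
        _ = 10 * μ * n := by ring
        _ ≤ k := hkμ
    exact_mod_cast h1
  exact core H hb hnV hdeg W' hWcard' hgood hT hDel P hk hbp hdisjP t ht u
end

section
/- For every integer C ≥ 1 there exists r₀ such that the following holds for all integers r ≥ r₀. Let T' be the perfect ternary tree with C+1 levels, having (3^C−1)/2 internal vertices and 3^C leaves, and let T be a tree obtained from T' by identifying each leaf of T' with a vertex of a (possibly different) tree of size r, these 3^C attached trees being pairwise disjoint. Let G be a graph with a vertex partition V(G) = U₁ ∪ U₂ ∪ W such that |U₁| = |U₂|, |W| = C, the induced subgraphs on U₁ and on U₂ are complete, every vertex of W is adjacent to every vertex of U₁ ∪ U₂, and G has no other edges. If G contains a copy of T (an injective graph homomorphism from T to G), then |U₁| ≥ (3^C+1)r/2. -/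
open SimpleGraph

/-- `H` contains a copy of `T`: there is an injective graph homomorphism from `T` to `H`. -/
def ContainsCopy {V W : Type*} (H : SimpleGraph W) (T : SimpleGraph V) : Prop :=
  ∃ f : V → W, Function.Injective f ∧ ∀ ⦃u v : V⦄, T.Adj u v → H.Adj (f u) (f v)

/-- `k` is a child of `m` in the heap-style encoding of the rooted ternary tree (root `1`,
children of `m` are `3m-1`, `3m`, `3m+1`). -/
def ternaryChild (m k : ℕ) : Prop := k = 3 * m - 1 ∨ k = 3 * m ∨ k = 3 * m + 1

/-- The tree obtained from the perfect ternary tree with levels `0,…,C` (whose `(3^C-1)/2`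
internal vertices are encoded heap-style by `1,…,(3^C-1)/2` and whose `3^C` leaves are encoded
by `(3^C-1)/2 + 1,…,(3^(C+1)-1)/2`) by identifying the `j`-th leaf with the vertex `roots j`
of the tree `Ts j` on `s` vertices, these attached trees being pairwise disjoint. -/
def gluedTernary (C s : ℕ) (Ts : Fin (3 ^ C) → SimpleGraph (Fin s))
    (roots : Fin (3 ^ C) → Fin s) :
    SimpleGraph (Fin ((3 ^ C - 1) / 2) ⊕ Fin (3 ^ C) × Fin s) :=
  SimpleGraph.fromRel fun x y =>
    match x, y with
    | Sum.inl i, Sum.inl i' => ternaryChild ((i : ℕ) + 1) ((i' : ℕ) + 1)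
    | Sum.inl i, Sum.inr (j, a) =>
        ternaryChild ((i : ℕ) + 1) ((3 ^ C - 1) / 2 + 1 + (j : ℕ)) ∧ a = roots j
    | Sum.inr _, Sum.inl _ => False
    | Sum.inr (j, a), Sum.inr (j', b) => j = j' ∧ (Ts j).Adj a b


namespace GluedAux

/-- heap position of a ternary-tree vertex coded as a list (head = deepest step). -/
def psi : List (Fin 3) → ℕ
  | [] => 1
  | i :: l => 3 * psi l + i.val - 1

lemma psi_pos (l : List (Fin 3)) : 1 ≤ psi l := by
  induction l with
  | nil => simp [psi]
  | cons i l ih => simp only [psi]; omega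

lemma psi_bounds (l : List (Fin 3)) :
    3 ^ l.length + 1 ≤ 2 * psi l ∧ 2 * psi l ≤ 3 ^ (l.length + 1) - 1 := by
  induction l with
  | nil => simp [psi]
  | cons i l ih =>
    have hp := psi_pos l
    have hi : i.val < 3 := i.isLt
    have h1 : (3:ℕ) ^ (l.length + 1) = 3 * 3 ^ l.length := by ring
    have h2 : (3:ℕ) ^ (l.length + 1 + 1) = 3 * 3 ^ (l.length + 1) := by ring
    simp only [psi, List.length_cons]
    omega

lemma psi_lt_of_length_lt {l₁ l₂ : List (Fin 3)} (h : l₁.length < l₂.length) :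
    psi l₁ < psi l₂ := by
  have h1 := (psi_bounds l₁).2
  have h2 := (psi_bounds l₂).1
  have h3 : (3:ℕ) ^ (l₁.length + 1) ≤ 3 ^ l₂.length :=
    Nat.pow_le_pow_right (by norm_num) h
  have h4 : 1 ≤ (3:ℕ) ^ l₁.length := Nat.one_le_pow _ _ (by norm_num)
  have h5 : 1 ≤ (3:ℕ) ^ l₂.length := Nat.one_le_pow _ _ (by norm_num)
  omega

lemma psi_length_eq {l₁ l₂ : List (Fin 3)} (h : psi l₁ = psi l₂) :
    l₁.length = l₂.length := by
  rcases lt_trichotomy l₁.length l₂.length with h' | h' | h'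
  · exact absurd h (by have := psi_lt_of_length_lt h'; omega)
  · exact h'
  · exact absurd h (by have := psi_lt_of_length_lt h'; omega)

lemma psi_inj : Function.Injective psi := by
  intro l₁
  induction l₁ with
  | nil =>
    intro l₂ h
    have := psi_length_eq h
    exact (List.length_eq_zero_iff.1 this.symm).symm
  | cons i l ih =>
    intro l₂ h
    have hlen := psi_length_eq h
    cases l₂ with
    | nil => simp at hlen
    | cons i' l' =>
      have hp := psi_pos l
      have hp' := psi_pos l'
      have hi : i.val < 3 := i.isLt
      have hi' : i'.val < 3 := i'.isLt
      simp only [psi] at h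
      have hll : l.length = l'.length := by simpa using hlen
      have hpsilt : psi l = psi l' := by
        rcases lt_trichotomy l.length l'.length with hc | hc | hc
        · have := psi_lt_of_length_lt hc; omega
        · rcases lt_trichotomy (psi l) (psi l') with hd | hd | hd
          · omega
          · exact hd
          · omega
        · have := psi_lt_of_length_lt hc; omega
      have : l = l' := ih hpsilt
      subst this
      have : i.val = i'.val := by omega
      rw [Fin.ext_iff.2 this]

/-- all lists over `Fin 3` of length `n`. -/
def allLists : ℕ → Finset (List (Fin 3))
  | 0 => {[]}
  | n + 1 => (allLists n).biUnion fun l => {(0 : Fin 3) :: l, (1 : Fin 3) :: l, (2 : Fin 3) :: l}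

lemma mem_allLists {n : ℕ} {l : List (Fin 3)} : l ∈ allLists n ↔ l.length = n := by
  induction n generalizing l with
  | zero => simp [allLists, List.length_eq_zero_iff]
  | succ n ih =>
    simp only [allLists, Finset.mem_biUnion, Finset.mem_insert, Finset.mem_singleton]
    constructor
    · rintro ⟨a, ha, h | h | h⟩ <;> subst h <;> simp [ih.1 ha]
    · intro h
      cases l with
      | nil => simp at h
      | cons i t =>
        refine ⟨t, ih.2 (by simpa using h), ?_⟩
        fin_cases i <;> simp

lemma card_allLists (n : ℕ) : (allLists n).card = 3 ^ n := by
  induction n with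
  | zero => simp [allLists]
  | succ n ih =>
    rw [allLists, Finset.card_biUnion]
    · have : ∀ l ∈ allLists n,
          ({(0 : Fin 3) :: l, (1 : Fin 3) :: l, (2 : Fin 3) :: l} : Finset (List (Fin 3))).card = 3 := by
        intro l _
        rw [Finset.card_insert_of_notMem (by simp), Finset.card_insert_of_notMem (by simp)]
        simp
      rw [Finset.sum_congr rfl this, Finset.sum_const, ih, smul_eq_mul, pow_succ]
    · intro x hx y hy hxy
      simp only [Finset.disjoint_left, Finset.mem_insert, Finset.mem_singleton]
      rintro a (rfl | rfl | rfl) (h | h | h) <;> simp_all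

def allListsLe (n : ℕ) : Finset (List (Fin 3)) := (Finset.range (n + 1)).biUnion allLists

lemma mem_allListsLe {n : ℕ} {l : List (Fin 3)} : l ∈ allListsLe n ↔ l.length ≤ n := by
  simp [allListsLe, mem_allLists, Nat.lt_succ_iff]

lemma card_suffix (c : ℕ) (x : List (Fin 3)) (hx : x.length ≤ c) :
    ((allLists c).filter (fun l => x <:+ l)).card = 3 ^ (c - x.length) := by
  rw [← card_allLists (c - x.length)]
  symm
  apply Finset.card_bij (fun z _ => z ++ x)
  · intro z hz
    rw [mem_allLists] at hz
    simp only [Finset.mem_filter, mem_allLists, List.length_append]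
    exact ⟨by omega, List.suffix_append z x⟩
  · intro z₁ h₁ z₂ h₂ h
    exact List.append_cancel_right h
  · intro l hl
    simp only [Finset.mem_filter, mem_allLists] at hl
    obtain ⟨hlen, hsuf⟩ := hl
    obtain ⟨z, hz⟩ := hsuf
    refine ⟨z, ?_, hz⟩
    rw [mem_allLists]
    have := congrArg List.length hz
    simp only [List.length_append] at this
    omega

lemma sum_pm {α : Type*} [DecidableEq α] (s : Finset α) (b : α → Bool) :
    ∑ l ∈ s, (if b l then (1 : ℤ) else -1) =
      ((s.filter (fun l => b l = true)).card : ℤ) - ((s.filter (fun l => ¬(b l = true))).card : ℤ) := by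
  rw [← Finset.sum_filter_add_sum_filter_not s (fun l => b l = true)]
  have h1 : ∑ l ∈ s.filter (fun l => b l = true), (if b l then (1 : ℤ) else -1)
      = ((s.filter (fun l => b l = true)).card : ℤ) := by
    rw [Finset.sum_congr rfl (fun l hl => ?_), Finset.sum_const, nsmul_eq_mul, mul_one]
    simp only [Finset.mem_filter] at hl
    simp [hl.2]
  have h2 : ∑ l ∈ s.filter (fun l => ¬(b l = true)), (if b l then (1 : ℤ) else -1)
      = -((s.filter (fun l => ¬(b l = true))).card : ℤ) := by
    rw [Finset.sum_congr rfl (fun l hl => ?_)]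
    · rw [Finset.sum_const, nsmul_eq_mul, mul_neg, mul_one]
    · simp only [Finset.mem_filter] at hl
      simp [hl.2]
  rw [h1, h2]
  ring

/-- the signed count of leaves (colored `true` minus colored `false`), over the
leaves not removed (`R`) and not marked (`K`). -/
def leafD (c : ℕ) (R K : Finset (List (Fin 3))) (χ : List (Fin 3) → Bool) : ℤ :=
  ∑ l ∈ (allLists c).filter (fun l => l ∉ R ∧ l ∉ K), (if χ l then (1 : ℤ) else -1)

end GluedAux

namespace GluedAux

theorem skeleton (c : ℕ) : ∀ (n : ℕ) (R K : Finset (List (Fin 3))) (χ : List (Fin 3) → Bool),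
    R.card + K.card = n →
    (∀ l ∈ R, l.length ≤ c) → (∀ l ∈ K, l.length = c) → Disjoint R K →
    R.card + K.card ≤ c →
    (∀ (i : Fin 3) (l : List (Fin 3)), l.length < c → l ∉ R → (i :: l) ∉ R → χ (i :: l) = χ l) →
    (3 ^ (c - R.card - K.card) + (K.card : ℤ) + ((R.filter (fun l => l.length = c)).card : ℤ))
      ≤ |leafD c R K χ| := by
  intro n
  induction n using Nat.strong_induction_on with
  | _ n IH =>
  intro R K χ hn hRlen hKlen hRK hbud hloc
  rcases K.eq_empty_or_nonempty with hKe | ⟨x, hxK⟩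
  · -- K is empty
    subst hKe
    simp only [Finset.card_empty, Nat.add_zero, Nat.cast_zero, add_zero] at *
    by_cases hdeep : ∃ x ∈ R, R.card ≤ x.length
    · obtain ⟨x, hxR, hxd⟩ := hdeep
      have hRpos : 1 ≤ R.card := Finset.card_pos.2 ⟨x, hxR⟩
      have hRc : R.card ≤ c := hbud
      by_cases hxc : x.length = c
      · -- remove a leaf from R
        set χ' := Function.update χ x (χ x.tail) with hχ'
        set R' := R.erase x with hR'
        have hR'card : R'.card = R.card - 1 := Finset.card_erase_of_mem hxR
        have hloc' : ∀ (i : Fin 3) (l : List (Fin 3)), l.length < c → l ∉ R' → (i :: l) ∉ R' →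
            χ' (i :: l) = χ' l := by
          intro i l hl hlR' hilR'
          have hlx : l ≠ x := by intro h; subst h; omega
          by_cases hil : i :: l = x
          · subst hil
            simp [hχ', Function.update_self, Function.update_of_ne hlx]
          · rw [hχ', Function.update_of_ne hil, Function.update_of_ne hlx]
            apply hloc i l hl
            · intro h; exact hlR' (Finset.mem_erase.2 ⟨hlx, h⟩)
            · intro h; exact hilR' (Finset.mem_erase.2 ⟨hil, h⟩)
        have hxF : x ∉ (allLists c).filter (fun l => l ∉ R ∧ l ∉ (∅ : Finset (List (Fin 3)))) := by
          simp [hxR]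
        have hFins : (allLists c).filter (fun l => l ∉ R' ∧ l ∉ (∅ : Finset (List (Fin 3))))
            = insert x ((allLists c).filter (fun l => l ∉ R ∧ l ∉ (∅ : Finset (List (Fin 3))))) := by
          ext a
          simp only [Finset.mem_filter, Finset.mem_insert, Finset.notMem_empty, not_false_iff,
            and_true, hR', Finset.mem_erase, mem_allLists]
          constructor
          · rintro ⟨ha, hb⟩
            by_cases hax : a = x
            · exact Or.inl hax
            · exact Or.inr ⟨ha, fun h => hb ⟨hax, h⟩⟩
          · rintro (rfl | ⟨ha, hb⟩)
            · exact ⟨hxc, fun h => h.1 rfl⟩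
            · exact ⟨ha, fun h => hb h.2⟩
        have hDeq : leafD c R' ∅ χ' = (if χ' x then (1:ℤ) else -1) + leafD c R ∅ χ := by
          rw [leafD, hFins, Finset.sum_insert hxF, leafD]
          congr 1
          apply Finset.sum_congr rfl
          intro a ha
          have hax : a ≠ x := by
            simp only [Finset.mem_filter] at ha
            intro h; exact ha.2.1 (h ▸ hxR)
          rw [hχ', Function.update_of_ne hax]
        have hlam : ((R'.filter (fun l => l.length = c)).card : ℤ)
            = ((R.filter (fun l => l.length = c)).card : ℤ) - 1 := by
          rw [hR', Finset.filter_erase, Finset.card_erase_of_mem (Finset.mem_filter.2 ⟨hxR, hxc⟩)]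
          have : 1 ≤ (R.filter (fun l => l.length = c)).card :=
            Finset.card_pos.2 ⟨x, Finset.mem_filter.2 ⟨hxR, hxc⟩⟩
          push_cast [Nat.cast_sub this]
          ring
        have hIH := IH (n - 1) (by omega) R' ∅ χ' (by simp [hR'card]; omega)
          (fun l hl => hRlen l (Finset.erase_subset _ _ hl)) (by simp)
          (by simp) (by simp [hR'card]; omega) hloc'
        simp only [Finset.card_empty, Nat.add_zero, Nat.cast_zero, add_zero] at hIH
        have he : c - R'.card - 0 = (c - R.card) + 1 := by omega
        rw [he, hlam] at hIH
        have habs : |leafD c R' ∅ χ'| ≤ |leafD c R ∅ χ| + 1 := by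
          rw [hDeq]
          calc |(if χ' x then (1:ℤ) else -1) + leafD c R ∅ χ|
              ≤ |(if χ' x then (1:ℤ) else -1)| + |leafD c R ∅ χ| := abs_add_le _ _
            _ ≤ |leafD c R ∅ χ| + 1 := by split_ifs <;> simp [add_comm]
        have hpow : (1:ℤ) ≤ 3 ^ (c - R.card) := one_le_pow₀ (by norm_num)
        have hps : (3:ℤ) ^ (c - R.card + 1) = 3 * 3 ^ (c - R.card) := by rw [pow_succ]; ring
        simp only [Nat.sub_zero]
        linarith
      · -- x is internal, length < c : recolor the subtree above x
        have hxlt : x.length < c := lt_of_le_of_ne (hRlen x hxR) hxc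
        set σ := χ x.tail with hσ
        set χ' : List (Fin 3) → Bool := fun l => if x <:+ l then σ else χ l with hχ'
        set R' := R.erase x with hR'
        have hR'card : R'.card = R.card - 1 := Finset.card_erase_of_mem hxR
        have hloc' : ∀ (i : Fin 3) (l : List (Fin 3)), l.length < c → l ∉ R' → (i :: l) ∉ R' →
            χ' (i :: l) = χ' l := by
          intro i l hl hlR' hilR'
          by_cases hsl : x <:+ l
          · have hsil : x <:+ i :: l := hsl.trans ⟨[i], rfl⟩
            simp [hχ', hsl, hsil]
          · by_cases hsil : x <:+ i :: l
            · have hx_eq : x = i :: l := by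
                rcases List.suffix_cons_iff.1 hsil with h | h
                · exact h
                · exact absurd h hsl
              have : σ = χ l := by rw [hσ, hx_eq]; simp
              simp [hχ', hsil, hsl, this]
            · simp only [hχ', if_neg hsil, if_neg hsl]
              apply hloc i l hl
              · intro h
                exact hlR' (Finset.mem_erase.2 ⟨fun he => hsl (he ▸ List.suffix_refl x), h⟩)
              · intro h
                exact hilR' (Finset.mem_erase.2 ⟨fun he => hsil (he ▸ List.suffix_refl x), h⟩)
        have hFeq : (allLists c).filter (fun l => l ∉ R' ∧ l ∉ (∅ : Finset (List (Fin 3))))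
            = (allLists c).filter (fun l => l ∉ R ∧ l ∉ (∅ : Finset (List (Fin 3)))) := by
          apply Finset.filter_congr
          intro a ha
          rw [mem_allLists] at ha
          have hax : a ≠ x := fun h => hxc (by rw [← h, ha])
          simp [hR', Finset.mem_erase, hax]
        have hdiff : |leafD c R' ∅ χ' - leafD c R ∅ χ| ≤ 2 * 3 ^ (c - x.length) := by
          rw [leafD, leafD, hFeq, ← Finset.sum_sub_distrib]
          calc |∑ l ∈ (allLists c).filter (fun l => l ∉ R ∧ l ∉ (∅ : Finset (List (Fin 3)))),
                  ((if χ' l then (1:ℤ) else -1) - (if χ l then (1:ℤ) else -1))|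
              ≤ ∑ l ∈ (allLists c).filter (fun l => l ∉ R ∧ l ∉ (∅ : Finset (List (Fin 3)))),
                  |(if χ' l then (1:ℤ) else -1) - (if χ l then (1:ℤ) else -1)| :=
                Finset.abs_sum_le_sum_abs _ _
            _ ≤ ∑ l ∈ (allLists c).filter (fun l => l ∉ R ∧ l ∉ (∅ : Finset (List (Fin 3)))),
                  (if x <:+ l then (2:ℤ) else 0) := by
                apply Finset.sum_le_sum
                intro l hl
                by_cases hs : x <:+ l
                · simp only [if_pos hs]
                  have : χ' l = σ := by simp [hχ', hs]
                  rw [this]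
                  split_ifs <;> norm_num
                · have : χ' l = χ l := by simp [hχ', hs]
                  simp [this, hs]
            _ ≤ ∑ l ∈ allLists c, (if x <:+ l then (2:ℤ) else 0) := by
                apply Finset.sum_le_sum_of_subset_of_nonneg (Finset.filter_subset _ _)
                intro l _ _
                split_ifs <;> norm_num
            _ = 2 * 3 ^ (c - x.length) := by
                rw [← Finset.sum_filter, Finset.sum_const, card_suffix c x (le_of_lt hxlt)]
                push_cast
                ring
        have hlam : R'.filter (fun l => l.length = c) = R.filter (fun l => l.length = c) := by
          rw [hR', Finset.filter_erase, Finset.erase_eq_of_notMem]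
          simp [hxc]
        have hIH := IH (n - 1) (by omega) R' ∅ χ' (by simp [hR'card]; omega)
          (fun l hl => hRlen l (Finset.erase_subset _ _ hl)) (by simp)
          (by simp) (by simp [hR'card]; omega) hloc'
        simp only [Finset.card_empty, Nat.add_zero, Nat.cast_zero, add_zero] at hIH
        have he : c - R'.card - 0 = (c - R.card) + 1 := by omega
        rw [he, hlam] at hIH
        have hple : (3:ℤ) ^ (c - x.length) ≤ 3 ^ (c - R.card) := by
          apply pow_le_pow_right₀ (by norm_num)
          omega
        have hps : (3:ℤ) ^ (c - R.card + 1) = 3 * 3 ^ (c - R.card) := by rw [pow_succ]; ring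
        have habs := abs_sub_abs_le_abs_sub (leafD c R' ∅ χ') (leafD c R ∅ χ)
        simp only [Nat.sub_zero]
        linarith [abs_nonneg (leafD c R' ∅ χ' - leafD c R ∅ χ)]
    · -- all removed vertices are at depth < R.card : mod-3^(c-v) and parity argument
      push_neg at hdeep
      have hvc : R.card ≤ c := hbud
      set v := R.card with hv
      have hlam : R.filter (fun l => l.length = c) = ∅ := by
        rw [Finset.filter_eq_empty_iff]
        intro l hl
        have := hdeep l hl
        omega
      have hnotR : ∀ l : List (Fin 3), v ≤ l.length → l ∉ R := by
        intro l hle hmem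
        have := hdeep l hmem
        omega
      have hF : (allLists c).filter (fun l => l ∉ R ∧ l ∉ (∅ : Finset (List (Fin 3)))) = allLists c := by
        apply Finset.filter_true_of_mem
        intro l hl
        rw [mem_allLists] at hl
        exact ⟨hnotR l (by omega), by simp⟩
      have claimA : ∀ (z u : List (Fin 3)), v ≤ u.length → z.length + u.length ≤ c →
          χ (z ++ u) = χ u := by
        intro z
        induction z with
        | nil => intro u _ _; simp
        | cons i z ih =>
          intro u hu hlen
          simp only [List.cons_append] at *
          have h1 : χ (i :: (z ++ u)) = χ (z ++ u) := by
            apply hloc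
            · simp only [List.length_append]
              simp only [List.length_cons] at hlen
              omega
            · exact hnotR _ (by simp [List.length_append]; omega)
            · exact hnotR _ (by simp [List.length_append]; omega)
          rw [h1]
          exact ih u hu (by simp only [List.length_cons] at hlen; omega)
      have hre : leafD c R ∅ χ
          = ∑ p ∈ (allLists (c - v)) ×ˢ (allLists v), (if χ (p.1 ++ p.2) then (1:ℤ) else -1) := by
        rw [leafD, hF]
        apply Finset.sum_nbij' (i := fun l => (l.take (c - v), l.drop (c - v)))
          (j := fun p => p.1 ++ p.2)
        · intro l hl
          rw [mem_allLists] at hl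
          simp only [Finset.mem_product, mem_allLists, List.length_take, List.length_drop]
          omega
        · intro p hp
          simp only [Finset.mem_product, mem_allLists] at hp
          rw [mem_allLists, List.length_append]
          omega
        · intro l _
          simp [List.take_append_drop]
        · intro p hp
          simp only [Finset.mem_product, mem_allLists] at hp
          ext : 1
          · simp [List.take_left' hp.1]
          · simp [List.drop_left' hp.1]
        · intro l _
          simp [List.take_append_drop]
      have hre2 : leafD c R ∅ χ
          = (3 ^ (c - v) : ℤ) * ∑ u ∈ allLists v, (if χ u then (1:ℤ) else -1) := by
        rw [hre, Finset.sum_product]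
        have : ∀ z ∈ allLists (c - v), ∀ u ∈ allLists v,
            (if χ (z ++ u) then (1:ℤ) else -1) = (if χ u then (1:ℤ) else -1) := by
          intro z hz u hu
          rw [mem_allLists] at hz hu
          rw [claimA z u (by omega) (by omega)]
        calc ∑ z ∈ allLists (c - v), ∑ u ∈ allLists v, (if χ (z ++ u) then (1:ℤ) else -1)
            = ∑ z ∈ allLists (c - v), ∑ u ∈ allLists v, (if χ u then (1:ℤ) else -1) := by
              apply Finset.sum_congr rfl
              intro z hz
              exact Finset.sum_congr rfl (fun u hu => this z hz u hu)
          _ = (3 ^ (c - v) : ℤ) * ∑ u ∈ allLists v, (if χ u then (1:ℤ) else -1) := by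
              rw [Finset.sum_const, card_allLists, nsmul_eq_mul]
              push_cast
              ring
      set E := ∑ u ∈ allLists v, (if χ u then (1:ℤ) else -1) with hE
      have hEne : E ≠ 0 := by
        intro h0
        have := sum_pm (allLists v) χ
        rw [← hE, h0] at this
        have hsplit := Finset.card_filter_add_card_filter_not
          (s := allLists v) (p := fun u => χ u = true)
        rw [card_allLists] at hsplit
        have hodd : Odd ((3:ℕ) ^ v) := Odd.pow (by decide)
        obtain ⟨m, hm⟩ := hodd
        omega
      have hEabs : (1:ℤ) ≤ |E| := Int.one_le_abs hEne
      rw [hlam]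
      simp only [Finset.card_empty, Nat.cast_zero, add_zero]
      rw [hre2, abs_mul]
      have h3 : |(3 ^ (c - v) : ℤ)| = 3 ^ (c - v) := abs_of_nonneg (by positivity)
      rw [h3]
      have : c - v - 0 = c - v := by omega
      rw [this]
      nlinarith [pow_pos (by norm_num : (0:ℤ) < 3) (c - v)]
  · -- K is nonempty : unmark x
    have hxlen := hKlen x hxK
    have hxR : x ∉ R := Finset.disjoint_right.1 hRK hxK
    set K' := K.erase x with hK'
    have hKpos : 1 ≤ K.card := Finset.card_pos.2 ⟨x, hxK⟩
    have hK'card : K'.card = K.card - 1 := Finset.card_erase_of_mem hxK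
    have hxF : x ∉ (allLists c).filter (fun l => l ∉ R ∧ l ∉ K) := by
      simp [hxK]
    have hFins : (allLists c).filter (fun l => l ∉ R ∧ l ∉ K')
        = insert x ((allLists c).filter (fun l => l ∉ R ∧ l ∉ K)) := by
      ext a
      simp only [Finset.mem_filter, Finset.mem_insert, hK', Finset.mem_erase, mem_allLists]
      constructor
      · rintro ⟨ha, hb, hc⟩
        by_cases hax : a = x
        · exact Or.inl hax
        · exact Or.inr ⟨ha, hb, fun h => hc ⟨hax, h⟩⟩
      · rintro (rfl | ⟨ha, hb, hc⟩)
        · exact ⟨hxlen, hxR, fun h => h.1 rfl⟩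
        · exact ⟨ha, hb, fun h => hc h.2⟩
    have hDeq : leafD c R K' χ = (if χ x then (1:ℤ) else -1) + leafD c R K χ := by
      rw [leafD, hFins, Finset.sum_insert hxF, leafD]
    have hIH := IH (n - 1) (by omega) R K' χ (by omega)
      hRlen (fun l hl => hKlen l (Finset.erase_subset _ _ hl))
      (Finset.disjoint_of_subset_right (Finset.erase_subset _ _) hRK)
      (by omega) hloc
    have he : c - R.card - K'.card = (c - R.card - K.card) + 1 := by omega
    rw [he] at hIH
    have habs : |leafD c R K' χ| ≤ |leafD c R K χ| + 1 := by
      rw [hDeq]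
      calc |(if χ x then (1:ℤ) else -1) + leafD c R K χ|
          ≤ |(if χ x then (1:ℤ) else -1)| + |leafD c R K χ| := abs_add_le _ _
        _ ≤ |leafD c R K χ| + 1 := by split_ifs <;> simp [add_comm]
    have hps : (3:ℤ) ^ (c - R.card - K.card + 1) = 3 * 3 ^ (c - R.card - K.card) := by
      rw [pow_succ]; ring
    have hpow : (1:ℤ) ≤ 3 ^ (c - R.card - K.card) :=
      one_le_pow₀ (by norm_num)
    have hKc : (K'.card : ℤ) = (K.card : ℤ) - 1 := by
      rw [hK'card]; push_cast [Nat.cast_sub hKpos]; ring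
    rw [hKc] at hIH
    linarith

-- ### position bijection machinery ###

lemma two_mul_I (C : ℕ) : 2 * ((3 ^ C - 1) / 2) = 3 ^ C - 1 := by
  obtain ⟨m, hm⟩ := (Odd.pow (by decide : Odd 3) : Odd ((3:ℕ) ^ C))
  omega

def leafIdx (C : ℕ) (l : List (Fin 3)) : Fin (3 ^ C) :=
  ⟨(psi l - ((3 ^ C - 1) / 2 + 1)) % 3 ^ C, Nat.mod_lt _ (Nat.pow_pos (n := C) (by norm_num))⟩

def vertMap (C r : ℕ) (roots : Fin (3 ^ C) → Fin r) (l : List (Fin 3)) :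
    Fin ((3 ^ C - 1) / 2) ⊕ Fin (3 ^ C) × Fin r :=
  if h : psi l - 1 < (3 ^ C - 1) / 2 then Sum.inl ⟨psi l - 1, h⟩
  else Sum.inr (leafIdx C l, roots (leafIdx C l))

lemma psi_int_lt {C : ℕ} {l : List (Fin 3)} (h : l.length < C) :
    psi l - 1 < (3 ^ C - 1) / 2 ∧ psi l ≤ (3 ^ C - 1) / 2 := by
  have h1 := (psi_bounds l).2
  have h2 : (3:ℕ) ^ (l.length + 1) ≤ 3 ^ C := Nat.pow_le_pow_right (by norm_num) h
  have h3 := two_mul_I C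
  have h4 := psi_pos l
  have h5 : 1 ≤ (3:ℕ) ^ (l.length + 1) := Nat.one_le_pow _ _ (by norm_num)
  omega

lemma psi_leaf_bounds {C : ℕ} {l : List (Fin 3)} (h : l.length = C) :
    (3 ^ C - 1) / 2 + 1 ≤ psi l ∧ psi l ≤ (3 ^ C - 1) / 2 + 3 ^ C := by
  have h1 := psi_bounds l
  rw [h] at h1
  have h2 := two_mul_I C
  have h3 : (3:ℕ) ^ (C + 1) = 3 * 3 ^ C := by ring
  have h5 : 1 ≤ (3:ℕ) ^ C := Nat.one_le_pow _ _ (by norm_num)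
  omega

lemma leafIdx_val {C : ℕ} {l : List (Fin 3)} (h : l.length = C) :
    (3 ^ C - 1) / 2 + 1 + (leafIdx C l).val = psi l := by
  have h1 := psi_leaf_bounds h
  have h2 : psi l - ((3 ^ C - 1) / 2 + 1) < 3 ^ C := by omega
  simp only [leafIdx, Nat.mod_eq_of_lt h2]
  omega

lemma vert_lt_def {C r : ℕ} {roots : Fin (3 ^ C) → Fin r} {l : List (Fin 3)} (h : l.length < C) :
    vertMap C r roots l = Sum.inl ⟨psi l - 1, (psi_int_lt h).1⟩ := by
  rw [vertMap, dif_pos (psi_int_lt h).1]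

lemma vert_eq_leaf {C r : ℕ} {roots : Fin (3 ^ C) → Fin r} {l : List (Fin 3)} (h : l.length = C) :
    vertMap C r roots l = Sum.inr (leafIdx C l, roots (leafIdx C l)) := by
  have h1 := psi_leaf_bounds h
  have h2 := two_mul_I C
  have h5 : 1 ≤ (3:ℕ) ^ C := Nat.one_le_pow _ _ (by norm_num)
  rw [vertMap, dif_neg (by omega)]

lemma leafIdx_injOn {C : ℕ} {l₁ l₂ : List (Fin 3)} (h₁ : l₁.length = C) (h₂ : l₂.length = C)
    (h : leafIdx C l₁ = leafIdx C l₂) : l₁ = l₂ := by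
  have e₁ := leafIdx_val h₁
  have e₂ := leafIdx_val h₂
  apply psi_inj
  have := Fin.val_eq_of_eq h
  omega

lemma vert_injOn {C r : ℕ} {roots : Fin (3 ^ C) → Fin r} {l₁ l₂ : List (Fin 3)}
    (h₁ : l₁.length ≤ C) (h₂ : l₂.length ≤ C)
    (h : vertMap C r roots l₁ = vertMap C r roots l₂) : l₁ = l₂ := by
  rcases lt_or_eq_of_le h₁ with hc₁ | hc₁ <;> rcases lt_or_eq_of_le h₂ with hc₂ | hc₂
  · rw [vert_lt_def hc₁, vert_lt_def hc₂] at h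
    have hv : psi l₁ - 1 = psi l₂ - 1 := by
      simpa [Fin.ext_iff] using h
    have p₁ := psi_pos l₁
    have p₂ := psi_pos l₂
    exact psi_inj (by omega)
  · rw [vert_lt_def hc₁, vert_eq_leaf hc₂] at h
    exact absurd h (by simp)
  · rw [vert_eq_leaf hc₁, vert_lt_def hc₂] at h
    exact absurd h (by simp)
  · rw [vert_eq_leaf hc₁, vert_eq_leaf hc₂] at h
    simp only [Sum.inr.injEq, Prod.mk.injEq] at h
    exact leafIdx_injOn hc₁ hc₂ h.1

lemma leaf_count (C : ℕ) (p : Fin (3 ^ C) → Prop) [DecidablePred p] :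
    ((allLists C).filter (fun l => p (leafIdx C l))).card = (Finset.univ.filter p).card := by
  classical
  have hinj : Set.InjOn (leafIdx C) ↑(allLists C) := by
    intro a ha b hb hab
    exact leafIdx_injOn (mem_allLists.1 ha) (mem_allLists.1 hb) hab
  have himg : (allLists C).image (leafIdx C) = Finset.univ := by
    apply Finset.eq_univ_of_card
    rw [Finset.card_image_of_injOn hinj, card_allLists]
    simp
  rw [← himg, Finset.filter_image,
    Finset.card_image_of_injOn (hinj.mono (by
      intro x hx
      simp only [Finset.coe_filter, Set.mem_setOf_eq] at hx
      exact hx.1))]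

lemma glued_adj_step (C r : ℕ) (Ts : Fin (3 ^ C) → SimpleGraph (Fin r))
    (roots : Fin (3 ^ C) → Fin r) (i : Fin 3) (l : List (Fin 3)) (hl : l.length < C) :
    (gluedTernary C r Ts roots).Adj (vertMap C r roots (i :: l)) (vertMap C r roots l) := by
  have hp := psi_pos l
  have hpil := psi_pos (i :: l)
  have hi : i.val < 3 := i.isLt
  have hpsieq : psi (i :: l) = 3 * psi l + i.val - 1 := rfl
  have hlt : psi l < psi (i :: l) := psi_lt_of_length_lt (by simp)
  have hchild : ternaryChild (psi l - 1 + 1) (psi (i :: l)) := by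
    unfold ternaryChild
    omega
  have hlen' : (i :: l).length ≤ C := by simp only [List.length_cons]; omega
  rcases lt_or_eq_of_le hlen' with hilC | hilC
  · rw [vert_lt_def hl, vert_lt_def hilC]
    rw [gluedTernary, SimpleGraph.fromRel_adj]
    constructor
    · intro hcon
      have : psi (i :: l) - 1 = psi l - 1 := by simpa [Fin.ext_iff] using hcon
      omega
    · right
      show ternaryChild (psi l - 1 + 1) (psi (i :: l) - 1 + 1)
      have : psi (i :: l) - 1 + 1 = psi (i :: l) := by omega
      rw [this]
      exact hchild
  · rw [vert_lt_def hl, vert_eq_leaf hilC]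
    rw [gluedTernary, SimpleGraph.fromRel_adj]
    refine ⟨by simp, Or.inr ?_⟩
    show ternaryChild (psi l - 1 + 1) ((3 ^ C - 1) / 2 + 1 + (leafIdx C (i :: l)).val)
      ∧ roots (leafIdx C (i :: l)) = roots (leafIdx C (i :: l))
    rw [leafIdx_val hilC]
    exact ⟨hchild, rfl⟩

-- ### data of an embedding ###

open Classical in
noncomputable def RsetD (C r : ℕ) (roots : Fin (3 ^ C) → Fin r) {V : Type}
    (f : Fin ((3 ^ C - 1) / 2) ⊕ Fin (3 ^ C) × Fin r → V) (W : Set V) :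
    Finset (List (Fin 3)) :=
  (allListsLe C).filter (fun l => f (vertMap C r roots l) ∈ W)

open Classical in
noncomputable def KsetD (C r : ℕ) (roots : Fin (3 ^ C) → Fin r) {V : Type}
    (f : Fin ((3 ^ C - 1) / 2) ⊕ Fin (3 ^ C) × Fin r → V) (W : Set V) :
    Finset (List (Fin 3)) :=
  (allLists C).filter
    (fun l => (∃ a, f (Sum.inr (leafIdx C l, a)) ∈ W) ∧ f (vertMap C r roots l) ∉ W)

open Classical in
noncomputable def chiD (C r : ℕ) (roots : Fin (3 ^ C) → Fin r) {V : Type}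
    (f : Fin ((3 ^ C - 1) / 2) ⊕ Fin (3 ^ C) × Fin r → V) (X : Set V) :
    List (Fin 3) → Bool :=
  fun l => decide (f (vertMap C r roots l) ∈ X)

lemma mem_RsetD {C r : ℕ} {roots : Fin (3 ^ C) → Fin r} {V : Type}
    {f : Fin ((3 ^ C - 1) / 2) ⊕ Fin (3 ^ C) × Fin r → V} {W : Set V} {l : List (Fin 3)} :
    l ∈ RsetD C r roots f W ↔ l.length ≤ C ∧ f (vertMap C r roots l) ∈ W := by
  simp [RsetD, mem_allListsLe]

lemma mem_KsetD {C r : ℕ} {roots : Fin (3 ^ C) → Fin r} {V : Type}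
    {f : Fin ((3 ^ C - 1) / 2) ⊕ Fin (3 ^ C) × Fin r → V} {W : Set V} {l : List (Fin 3)} :
    l ∈ KsetD C r roots f W ↔
      l.length = C ∧ (∃ a, f (Sum.inr (leafIdx C l, a)) ∈ W) ∧ f (vertMap C r roots l) ∉ W := by
  simp [KsetD, mem_allLists]

lemma chiD_eq_true {C r : ℕ} {roots : Fin (3 ^ C) → Fin r} {V : Type}
    {f : Fin ((3 ^ C - 1) / 2) ⊕ Fin (3 ^ C) × Fin r → V} {X : Set V} {l : List (Fin 3)} :
    chiD C r roots f X l = true ↔ f (vertMap C r roots l) ∈ X := by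
  simp [chiD]

lemma core (C r : ℕ) (hC : 1 ≤ C)
    (Ts : Fin (3 ^ C) → SimpleGraph (Fin r)) (roots : Fin (3 ^ C) → Fin r)
    (hconn : ∀ j, (Ts j).Connected)
    {V : Type} [Fintype V] (X Y W : Set V)
    (f : Fin ((3 ^ C - 1) / 2) ⊕ Fin (3 ^ C) × Fin r → V)
    (hfinj : Function.Injective f)
    (hstep : ∀ a b, (gluedTernary C r Ts roots).Adj a b → f a ∉ W → f b ∉ W →
      (f a ∈ X ↔ f b ∈ X))
    (hpart : ∀ x : V,
      (x ∈ X ∧ x ∉ Y ∧ x ∉ W) ∨ (x ∈ Y ∧ x ∉ X ∧ x ∉ W) ∨ (x ∈ W ∧ x ∉ X ∧ x ∉ Y))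
    (horient : ((({j : Fin (3 ^ C) | ∃ a, f (Sum.inr (j, a)) ∈ W}).ncard : ℤ) + 1)
        ≤ leafD C (RsetD C r roots f W) (KsetD C r roots f W) (chiD C r roots f X)) :
    ((3 ^ C + 1) * r : ℤ) ≤ 2 * (X.ncard : ℤ) := by
  classical
  set touched : Fin (3 ^ C) → Prop := fun j => ∃ a, f (Sum.inr (j, a)) ∈ W with htouched
  -- monochromaticity of untouched attached trees
  have hmono : ∀ j : Fin (3 ^ C), ¬ touched j → ∀ a : Fin r,
      (f (Sum.inr (j, a)) ∈ X ↔ f (Sum.inr (j, roots j)) ∈ X) := by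
    intro j hj
    have hnW : ∀ b : Fin r, f (Sum.inr (j, b)) ∉ W := by
      intro b hb; exact hj ⟨b, hb⟩
    suffices h : ∀ a b : Fin r, (Ts j).Reachable a b →
        (f (Sum.inr (j, a)) ∈ X ↔ f (Sum.inr (j, b)) ∈ X) by
      intro a
      exact h a (roots j) ((hconn j).preconnected a (roots j))
    rintro a b ⟨w⟩
    induction w with
    | nil => exact Iff.rfl
    | @cons u v _ huv p ih =>
      refine Iff.trans ?_ ih
      apply hstep
      · rw [gluedTernary, SimpleGraph.fromRel_adj]
        refine ⟨by simp [huv.ne], Or.inl ?_⟩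
        exact ⟨rfl, huv⟩
      · exact hnW u
      · exact hnW v
  have hkn : ({j : Fin (3 ^ C) | ∃ a, f (Sum.inr (j, a)) ∈ W}).ncard
      = (Finset.univ.filter touched).card := by
    rw [Set.ncard_eq_toFinset_card']
    simp only [htouched, Set.toFinset_setOf]
  set k : ℕ := (Finset.univ.filter touched).card with hk
  set M₁ : ℕ := (Finset.univ.filter
    (fun j : Fin (3 ^ C) => ¬ touched j ∧ f (Sum.inr (j, roots j)) ∈ X)).card with hM₁
  set M₂ : ℕ := (Finset.univ.filter
    (fun j : Fin (3 ^ C) => ¬ touched j ∧ f (Sum.inr (j, roots j)) ∉ X)).card with hM₂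
  -- identify the leaf sum with M₁ - M₂
  have hDeq : leafD C (RsetD C r roots f W) (KsetD C r roots f W) (chiD C r roots f X)
      = (M₁ : ℤ) - (M₂ : ℤ) := by
    have hF : (allLists C).filter
        (fun l => l ∉ RsetD C r roots f W ∧ l ∉ KsetD C r roots f W)
        = (allLists C).filter (fun l => ¬ touched (leafIdx C l)) := by
      apply Finset.filter_congr
      intro l hl
      rw [mem_allLists] at hl
      rw [mem_RsetD, mem_KsetD]
      rw [vert_eq_leaf hl]
      constructor
      · rintro ⟨h1, h2⟩ ht
        have hW : f (Sum.inr (leafIdx C l, roots (leafIdx C l))) ∉ W := by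
          intro hw; exact h1 ⟨le_of_eq hl, hw⟩
        exact h2 ⟨hl, ht, hW⟩
      · intro ht
        constructor
        · rintro ⟨-, hw⟩
          exact ht ⟨roots (leafIdx C l), hw⟩
        · rintro ⟨-, ht', -⟩
          exact ht ht'
    rw [leafD, hF, sum_pm]
    have e₁ : ((allLists C).filter (fun l => ¬ touched (leafIdx C l))).filter
          (fun l => chiD C r roots f X l = true)
        = (allLists C).filter (fun l =>
            ¬ touched (leafIdx C l) ∧ f (Sum.inr (leafIdx C l, roots (leafIdx C l))) ∈ X) := by
      rw [Finset.filter_filter]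
      apply Finset.filter_congr
      intro l hl
      rw [mem_allLists] at hl
      rw [chiD_eq_true, vert_eq_leaf hl]
    have e₂ : ((allLists C).filter (fun l => ¬ touched (leafIdx C l))).filter
          (fun l => ¬ (chiD C r roots f X l = true))
        = (allLists C).filter (fun l =>
            ¬ touched (leafIdx C l) ∧ f (Sum.inr (leafIdx C l, roots (leafIdx C l))) ∉ X) := by
      rw [Finset.filter_filter]
      apply Finset.filter_congr
      intro l hl
      rw [mem_allLists] at hl
      rw [chiD_eq_true, vert_eq_leaf hl]
    have c₁ : ((allLists C).filter (fun l =>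
          ¬ touched (leafIdx C l) ∧ f (Sum.inr (leafIdx C l, roots (leafIdx C l))) ∈ X)).card
        = M₁ := by
      rw [hM₁]
      exact leaf_count C (fun j => ¬ touched j ∧ f (Sum.inr (j, roots j)) ∈ X)
    have c₂ : ((allLists C).filter (fun l =>
          ¬ touched (leafIdx C l) ∧ f (Sum.inr (leafIdx C l, roots (leafIdx C l))) ∉ X)).card
        = M₂ := by
      rw [hM₂]
      exact leaf_count C (fun j => ¬ touched j ∧ f (Sum.inr (j, roots j)) ∉ X)
    rw [e₁, e₂, c₁, c₂]
  -- the three vertex classes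
  set LX : Finset (Fin ((3 ^ C - 1) / 2) ⊕ Fin (3 ^ C) × Fin r) :=
    Finset.univ.filter (fun t => f t ∈ X) with hLX
  set LY : Finset (Fin ((3 ^ C - 1) / 2) ⊕ Fin (3 ^ C) × Fin r) :=
    Finset.univ.filter (fun t => f t ∈ Y) with hLY
  set S : Finset (Fin ((3 ^ C - 1) / 2) ⊕ Fin (3 ^ C) × Fin r) :=
    Finset.univ.filter (fun t => f t ∈ W) with hS
  have htot : LX.card + LY.card + S.card = (3 ^ C - 1) / 2 + 3 ^ C * r := by
    rw [hLX, hLY, hS, Finset.card_filter, Finset.card_filter, Finset.card_filter,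
      ← Finset.sum_add_distrib, ← Finset.sum_add_distrib]
    have : ∀ t : Fin ((3 ^ C - 1) / 2) ⊕ Fin (3 ^ C) × Fin r,
        ((if f t ∈ X then 1 else 0) + (if f t ∈ Y then 1 else 0) + (if f t ∈ W then 1 else 0) : ℕ)
          = 1 := by
      intro t
      rcases hpart (f t) with ⟨h1, h2, h3⟩ | ⟨h1, h2, h3⟩ | ⟨h1, h2, h3⟩ <;> simp [h1, h2, h3]
    rw [Finset.sum_congr rfl (fun t _ => this t), Finset.sum_const, smul_eq_mul, mul_one,
      Finset.card_univ]
    simp [Fintype.card_sum, Fintype.card_prod]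
  have hLXlb : M₁ * r ≤ LX.card := by
    have hsub : ((Finset.univ.filter
          (fun j : Fin (3 ^ C) => ¬ touched j ∧ f (Sum.inr (j, roots j)) ∈ X)) ×ˢ
          (Finset.univ : Finset (Fin r))).image
          (fun p : Fin (3 ^ C) × Fin r => (Sum.inr p : Fin ((3 ^ C - 1) / 2) ⊕ Fin (3 ^ C) × Fin r))
        ⊆ LX := by
      intro t ht
      simp only [Finset.mem_image, Finset.mem_product, Finset.mem_filter, Finset.mem_univ,
        true_and] at ht
      obtain ⟨⟨j, a⟩, ⟨⟨hnt, hrX⟩, -⟩, rfl⟩ := ht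
      rw [hLX, Finset.mem_filter]
      exact ⟨Finset.mem_univ _, (hmono j hnt a).2 hrX⟩
    have := Finset.card_le_card hsub
    rwa [Finset.card_image_of_injective _ Sum.inr_injective, Finset.card_product,
      Finset.card_univ, Fintype.card_fin] at this
  have hLYub : LY.card + S.card ≤ M₂ * r + (3 ^ C - 1) / 2 + k * r := by
    have h1 : LY.card + S.card
        = ∑ t : Fin ((3 ^ C - 1) / 2) ⊕ Fin (3 ^ C) × Fin r,
            (if f t ∈ Y ∨ f t ∈ W then 1 else 0) := by
      rw [hLY, hS, Finset.card_filter, Finset.card_filter, ← Finset.sum_add_distrib]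
      apply Finset.sum_congr rfl
      intro t _
      rcases hpart (f t) with ⟨h1, h2, h3⟩ | ⟨h1, h2, h3⟩ | ⟨h1, h2, h3⟩ <;> simp [h1, h2, h3]
    rw [h1, Fintype.sum_sum_type]
    have h2 : (∑ a : Fin ((3 ^ C - 1) / 2),
        (if f (Sum.inl a) ∈ Y ∨ f (Sum.inl a) ∈ W then 1 else 0)) ≤ (3 ^ C - 1) / 2 := by
      calc (∑ a : Fin ((3 ^ C - 1) / 2),
          (if f (Sum.inl a) ∈ Y ∨ f (Sum.inl a) ∈ W then 1 else 0))
          ≤ ∑ _a : Fin ((3 ^ C - 1) / 2), 1 := by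
            apply Finset.sum_le_sum; intro a _; split_ifs <;> norm_num
        _ = (3 ^ C - 1) / 2 := by simp
    have h3 : (∑ p : Fin (3 ^ C) × Fin r,
        (if f (Sum.inr p) ∈ Y ∨ f (Sum.inr p) ∈ W then 1 else 0)) ≤ (M₂ + k) * r := by
      rw [Fintype.sum_prod_type]
      have hj : ∀ j : Fin (3 ^ C),
          (∑ a : Fin r, (if f (Sum.inr (j, a)) ∈ Y ∨ f (Sum.inr (j, a)) ∈ W then 1 else 0))
          ≤ (if touched j ∨ (¬ touched j ∧ f (Sum.inr (j, roots j)) ∉ X) then r else 0) := by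
        intro j
        by_cases hPj : touched j ∨ (¬ touched j ∧ f (Sum.inr (j, roots j)) ∉ X)
        · rw [if_pos hPj]
          calc (∑ a : Fin r, (if f (Sum.inr (j, a)) ∈ Y ∨ f (Sum.inr (j, a)) ∈ W then 1 else 0))
              ≤ ∑ _a : Fin r, 1 := by
                apply Finset.sum_le_sum; intro a _; split_ifs <;> norm_num
            _ = r := by simp
        · rw [if_neg hPj]
          push_neg at hPj
          obtain ⟨hnt, hrtX⟩ := hPj
          apply le_of_eq
          apply Finset.sum_eq_zero
          intro a _
          have haW : f (Sum.inr (j, a)) ∉ W := fun hw => hnt ⟨a, hw⟩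
          have haX : f (Sum.inr (j, a)) ∈ X := (hmono j hnt a).2 (hrtX hnt)
          have haY : f (Sum.inr (j, a)) ∉ Y := by
            rcases hpart (f (Sum.inr (j, a))) with ⟨-, h2, -⟩ | ⟨-, h2, -⟩ | ⟨-, h2, -⟩
            · exact h2
            · exact absurd haX h2
            · exact absurd haX h2
          simp [haW, haY]
      calc (∑ j : Fin (3 ^ C), ∑ a : Fin r,
            (if f (Sum.inr (j, a)) ∈ Y ∨ f (Sum.inr (j, a)) ∈ W then 1 else 0))
          ≤ ∑ j : Fin (3 ^ C),
            (if touched j ∨ (¬ touched j ∧ f (Sum.inr (j, roots j)) ∉ X) then r else 0) :=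
            Finset.sum_le_sum (fun j _ => hj j)
        _ = ((Finset.univ.filter (fun j : Fin (3 ^ C) =>
              touched j ∨ (¬ touched j ∧ f (Sum.inr (j, roots j)) ∉ X))).card) * r := by
            rw [← Finset.sum_filter, Finset.sum_const, smul_eq_mul]
        _ = (M₂ + k) * r := by
            congr 1
            rw [Finset.filter_or, Finset.card_union_of_disjoint ?hdisj, hM₂, hk]
            case hdisj =>
              rw [Finset.disjoint_left]
              intro j hj₁ hj₂
              simp only [Finset.mem_filter] at hj₁ hj₂
              exact hj₂.2.1 hj₁.2
            omega
    rw [add_mul] at h3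
    omega
  -- X.ncard bound
  have hXle : LX.card ≤ X.ncard := by
    rw [Set.ncard_eq_toFinset_card X (Set.toFinite X)]
    have hsub : LX.image f ⊆ (Set.toFinite X).toFinset := by
      intro v hv
      simp only [Finset.mem_image] at hv
      obtain ⟨t, ht, rfl⟩ := hv
      rw [hLX, Finset.mem_filter] at ht
      rw [Set.Finite.mem_toFinset]
      exact ht.2
    have := Finset.card_le_card hsub
    rwa [Finset.card_image_of_injective _ hfinj] at this
  -- finish with arithmetic over ℤ
  rw [hDeq, hkn] at horient
  have hrnn : (0 : ℤ) ≤ (r : ℤ) := by positivity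
  have hmul : ((M₁ : ℤ) - M₂ - k) * r ≥ 1 * r := by
    apply mul_le_mul_of_nonneg_right _ hrnn
    linarith
  have htotZ : (LX.card : ℤ) + LY.card + S.card = ((3 ^ C - 1) / 2 : ℕ) + 3 ^ C * r := by
    exact_mod_cast htot
  have hLXlbZ : (M₁ : ℤ) * r ≤ LX.card := by exact_mod_cast hLXlb
  have hLYubZ : (LY.card : ℤ) + S.card ≤ M₂ * r + ((3 ^ C - 1) / 2 : ℕ) + k * r := by
    exact_mod_cast hLYub
  have hfin : ((3 ^ C : ℤ) + 1) * r ≤ 2 * LX.card := by nlinarith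
  have : (LX.card : ℤ) ≤ X.ncard := by exact_mod_cast hXle
  linarith

end GluedAux

open GluedAux in
theorem glued_ternary_embedding_lower_bound (C : ℕ) (hC : 1 ≤ C) :
    ∃ r₀ : ℕ, ∀ r : ℕ, r₀ ≤ r →
      ∀ (Ts : Fin (3 ^ C) → SimpleGraph (Fin r)) (roots : Fin (3 ^ C) → Fin r),
        (∀ j, (Ts j).IsTree) →
        ∀ (V : Type) [Finite V] (G : SimpleGraph V) (U₁ U₂ W : Set V),
          Disjoint U₁ U₂ → Disjoint U₁ W → Disjoint U₂ W →
          U₁ ∪ U₂ ∪ W = Set.univ →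
          U₁.ncard = U₂.ncard → W.ncard = C →
          (∀ u v : V, G.Adj u v ↔ u ≠ v ∧
            ((u ∈ U₁ ∧ v ∈ U₁) ∨ (u ∈ U₂ ∧ v ∈ U₂) ∨
              (u ∈ W ∧ (v ∈ U₁ ∨ v ∈ U₂)) ∨ (v ∈ W ∧ (u ∈ U₁ ∨ u ∈ U₂)))) →
          ContainsCopy G (gluedTernary C r Ts roots) →
          ((3 : ℝ) ^ C + 1) * (r : ℝ) / 2 ≤ (U₁.ncard : ℝ) := by
  classical
  refine ⟨1, ?_⟩
  intro r hr Ts roots hTs V hVfin G U₁ U₂ W hd12 hd1W hd2W hUnion hcard hWc hadj hcopy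
  haveI : Fintype V := Fintype.ofFinite V
  obtain ⟨f, hfinj, hfhom⟩ := hcopy
  have hpart1 : ∀ x : V,
      (x ∈ U₁ ∧ x ∉ U₂ ∧ x ∉ W) ∨ (x ∈ U₂ ∧ x ∉ U₁ ∧ x ∉ W) ∨ (x ∈ W ∧ x ∉ U₁ ∧ x ∉ U₂) := by
    intro x
    have hx : x ∈ U₁ ∪ U₂ ∪ W := by rw [hUnion]; trivial
    have d12 := Set.disjoint_left.1 hd12
    have d1W := Set.disjoint_left.1 hd1W
    have d2W := Set.disjoint_left.1 hd2W
    rcases hx with (h | h) | h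
    · exact Or.inl ⟨h, d12 h, d1W h⟩
    · exact Or.inr (Or.inl ⟨h, fun h' => d12 h' h, d2W h⟩)
    · exact Or.inr (Or.inr ⟨h, fun h' => d1W h' h, fun h' => d2W h' h⟩)
  have hpart2 : ∀ x : V,
      (x ∈ U₂ ∧ x ∉ U₁ ∧ x ∉ W) ∨ (x ∈ U₁ ∧ x ∉ U₂ ∧ x ∉ W) ∨ (x ∈ W ∧ x ∉ U₂ ∧ x ∉ U₁) := by
    intro x
    rcases hpart1 x with h | h | h
    · exact Or.inr (Or.inl h)
    · exact Or.inl h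
    · exact Or.inr (Or.inr ⟨h.1, h.2.2, h.2.1⟩)
  have hstep1 : ∀ a b, (gluedTernary C r Ts roots).Adj a b → f a ∉ W → f b ∉ W →
      (f a ∈ U₁ ↔ f b ∈ U₁) := by
    intro a b hab haW hbW
    have h := (hadj _ _).1 (hfhom hab)
    rcases h.2 with ⟨h1, h2⟩ | ⟨h1, h2⟩ | ⟨h1, -⟩ | ⟨h1, -⟩
    · simp [h1, h2]
    · exact iff_of_false (Set.disjoint_right.1 hd12 h1) (Set.disjoint_right.1 hd12 h2)
    · exact absurd h1 haW
    · exact absurd h1 hbW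
  have hstep2 : ∀ a b, (gluedTernary C r Ts roots).Adj a b → f a ∉ W → f b ∉ W →
      (f a ∈ U₂ ↔ f b ∈ U₂) := by
    intro a b hab haW hbW
    have h := (hadj _ _).1 (hfhom hab)
    rcases h.2 with ⟨h1, h2⟩ | ⟨h1, h2⟩ | ⟨h1, -⟩ | ⟨h1, -⟩
    · exact iff_of_false (Set.disjoint_left.1 hd12 h1) (Set.disjoint_left.1 hd12 h2)
    · simp [h1, h2]
    · exact absurd h1 haW
    · exact absurd h1 hbW
  have hconn : ∀ j, (Ts j).Connected := fun j => (hTs j).isConnected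
  set Rs := RsetD C r roots f W with hRs
  set Ks := KsetD C r roots f W with hKs
  have hRlen : ∀ l ∈ Rs, l.length ≤ C := fun l hl => (mem_RsetD.1 hl).1
  have hKlen : ∀ l ∈ Ks, l.length = C := fun l hl => (mem_KsetD.1 hl).1
  have hdisjRK : Disjoint Rs Ks := by
    rw [Finset.disjoint_left]
    intro l hlR hlK
    exact (mem_KsetD.1 hlK).2.2 (mem_RsetD.1 hlR).2
  set Sf : Finset (Fin ((3 ^ C - 1) / 2) ⊕ Fin (3 ^ C) × Fin r) :=
    Finset.univ.filter (fun t => f t ∈ W) with hSf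
  have hWfin : W.Finite := Set.toFinite W
  have hScard : Sf.card ≤ C := by
    have hsub : Sf.image f ⊆ hWfin.toFinset := by
      intro v hv
      simp only [Finset.mem_image] at hv
      obtain ⟨t, ht, rfl⟩ := hv
      rw [hSf, Finset.mem_filter] at ht
      rw [Set.Finite.mem_toFinset]
      exact ht.2
    have h1 := Finset.card_le_card hsub
    rw [Finset.card_image_of_injective _ hfinj] at h1
    have h2 : hWfin.toFinset.card = C := by
      rw [← Set.ncard_eq_toFinset_card W hWfin]
      exact hWc
    omega
  set pick : Fin (3 ^ C) → Fin r :=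
    fun j => if h : ∃ a, f (Sum.inr (j, a)) ∈ W then Classical.choose h else roots j with hpickdef
  have hpick : ∀ j (h : ∃ a, f (Sum.inr (j, a)) ∈ W), f (Sum.inr (j, pick j)) ∈ W := by
    intro j h
    simp only [hpickdef, dif_pos h]
    exact Classical.choose_spec h
  set θ : List (Fin 3) → Fin ((3 ^ C - 1) / 2) ⊕ Fin (3 ^ C) × Fin r :=
    fun l => if l ∈ Ks then Sum.inr (leafIdx C l, pick (leafIdx C l))
      else vertMap C r roots l with hθ
  have hmapsθ : ∀ l ∈ Rs ∪ Ks, θ l ∈ Sf := by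
    intro l hl
    rw [Finset.mem_union] at hl
    by_cases hlK : l ∈ Ks
    · simp only [hθ, if_pos hlK, hSf, Finset.mem_filter]
      exact ⟨Finset.mem_univ _, hpick _ (mem_KsetD.1 hlK).2.1⟩
    · have hlR : l ∈ Rs := hl.resolve_right hlK
      simp only [hθ, if_neg hlK, hSf, Finset.mem_filter]
      exact ⟨Finset.mem_univ _, (mem_RsetD.1 hlR).2⟩
  have hinjθ : Set.InjOn θ ↑(Rs ∪ Ks) := by
    intro a ha b hb heq
    simp only [Finset.coe_union, Set.mem_union, Finset.mem_coe] at ha hb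
    have hlena : a.length ≤ C := by
      rcases ha with h | h
      exacts [hRlen a h, le_of_eq (hKlen a h)]
    have hlenb : b.length ≤ C := by
      rcases hb with h | h
      exacts [hRlen b h, le_of_eq (hKlen b h)]
    simp only [hθ] at heq
    by_cases haK : a ∈ Ks <;> by_cases hbK : b ∈ Ks
    · rw [if_pos haK, if_pos hbK] at heq
      simp only [Sum.inr.injEq, Prod.mk.injEq] at heq
      exact leafIdx_injOn (hKlen a haK) (hKlen b hbK) heq.1
    · rw [if_pos haK, if_neg hbK] at heq
      rcases lt_or_eq_of_le hlenb with hb' | hb'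
      · rw [vert_lt_def hb'] at heq
        exact absurd heq (by simp)
      · rw [vert_eq_leaf hb'] at heq
        simp only [Sum.inr.injEq, Prod.mk.injEq] at heq
        exact leafIdx_injOn (hKlen a haK) hb' heq.1
    · rw [if_neg haK, if_pos hbK] at heq
      rcases lt_or_eq_of_le hlena with ha' | ha'
      · rw [vert_lt_def ha'] at heq
        exact absurd heq (by simp)
      · rw [vert_eq_leaf ha'] at heq
        simp only [Sum.inr.injEq, Prod.mk.injEq] at heq
        exact leafIdx_injOn ha' (hKlen b hbK) heq.1
    · rw [if_neg haK, if_neg hbK] at heq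
      exact vert_injOn hlena hlenb heq
  have hbud : Rs.card + Ks.card ≤ C := by
    rw [← Finset.card_union_of_disjoint hdisjRK]
    exact le_trans (Finset.card_le_card_of_injOn θ hmapsθ hinjθ) hScard
  set χ₁ := chiD C r roots f U₁ with hχ₁
  have hloc1 : ∀ (i : Fin 3) (l : List (Fin 3)), l.length < C → l ∉ Rs → (i :: l) ∉ Rs →
      χ₁ (i :: l) = χ₁ l := by
    intro i l hl hlR hilR
    have hlW : f (vertMap C r roots l) ∉ W := fun hw =>
      hlR (mem_RsetD.2 ⟨le_of_lt hl, hw⟩)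
    have hilW : f (vertMap C r roots (i :: l)) ∉ W := fun hw =>
      hilR (mem_RsetD.2 ⟨by simp only [List.length_cons]; omega, hw⟩)
    have hiff := hstep1 _ _ (glued_adj_step C r Ts roots i l hl) hilW hlW
    simp only [hχ₁, chiD]
    exact decide_eq_decide.2 hiff
  have hSK := skeleton C (Rs.card + Ks.card) Rs Ks χ₁ rfl hRlen hKlen hdisjRK hbud hloc1
  have hnc : ({j : Fin (3 ^ C) | ∃ a, f (Sum.inr (j, a)) ∈ W}).ncard
      = (Finset.univ.filter (fun j : Fin (3 ^ C) => ∃ a, f (Sum.inr (j, a)) ∈ W)).card := by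
    rw [Set.ncard_eq_toFinset_card']
    simp [Set.toFinset_setOf]
  have hlamk : (Rs.filter (fun l => l.length = C)).card + Ks.card
      = (Finset.univ.filter (fun j : Fin (3 ^ C) => ∃ a, f (Sum.inr (j, a)) ∈ W)).card := by
    have e₀ : Rs.filter (fun l => l.length = C)
        = ((allLists C).filter (fun l => (∃ a, f (Sum.inr (leafIdx C l, a)) ∈ W))).filter
            (fun l => f (vertMap C r roots l) ∈ W) := by
      ext l
      rw [Finset.mem_filter, Finset.mem_filter, Finset.mem_filter, mem_RsetD, mem_allLists]
      constructor
      · rintro ⟨⟨-, hw⟩, hlen⟩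
        refine ⟨⟨hlen, ⟨roots (leafIdx C l), ?_⟩⟩, hw⟩
        rw [← vert_eq_leaf hlen]
        exact hw
      · rintro ⟨⟨hlen, -⟩, hw⟩
        exact ⟨⟨le_of_eq hlen, hw⟩, hlen⟩
    have e₁ : Ks = ((allLists C).filter (fun l => (∃ a, f (Sum.inr (leafIdx C l, a)) ∈ W))).filter
        (fun l => ¬ (f (vertMap C r roots l) ∈ W)) := by
      ext l
      rw [mem_KsetD, Finset.mem_filter, Finset.mem_filter, mem_allLists]
      tauto
    rw [e₀, e₁, Finset.card_filter_add_card_filter_not]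
    exact leaf_count C (fun j => ∃ a, f (Sum.inr (j, a)) ∈ W)
  have habs : ((Finset.univ.filter
        (fun j : Fin (3 ^ C) => ∃ a, f (Sum.inr (j, a)) ∈ W)).card : ℤ) + 1
      ≤ |leafD C Rs Ks χ₁| := by
    have hpow1 : (1:ℤ) ≤ 3 ^ (C - Rs.card - Ks.card) := one_le_pow₀ (by norm_num)
    have hcast : ((Rs.filter (fun l => l.length = C)).card : ℤ) + (Ks.card : ℤ)
        = ((Finset.univ.filter
            (fun j : Fin (3 ^ C) => ∃ a, f (Sum.inr (j, a)) ∈ W)).card : ℤ) := by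
      exact_mod_cast hlamk
    linarith [hSK]
  have hfinish : ∀ n : ℕ, ((3 ^ C + 1) * r : ℤ) ≤ 2 * (n : ℤ) →
      ((3 : ℝ) ^ C + 1) * (r : ℝ) / 2 ≤ (n : ℝ) := by
    intro n hn
    have h2 : ((3 : ℝ) ^ C + 1) * (r : ℝ) ≤ 2 * (n : ℝ) := by exact_mod_cast hn
    linarith
  rcases le_or_gt 0 (leafD C Rs Ks χ₁) with hpos | hneg
  · have horient : (({j : Fin (3 ^ C) | ∃ a, f (Sum.inr (j, a)) ∈ W}).ncard : ℤ) + 1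
        ≤ leafD C (RsetD C r roots f W) (KsetD C r roots f W) (chiD C r roots f U₁) := by
      rw [hnc]
      rw [abs_of_nonneg hpos] at habs
      exact habs
    exact hfinish _ (core C r hC Ts roots hconn U₁ U₂ W f hfinj hstep1 hpart1 horient)
  · set χ₂ := chiD C r roots f U₂ with hχ₂
    have hDflip : leafD C Rs Ks χ₂ = - leafD C Rs Ks χ₁ := by
      rw [leafD, leafD, ← Finset.sum_neg_distrib]
      apply Finset.sum_congr rfl
      intro l hl
      simp only [Finset.mem_filter] at hl
      obtain ⟨hlen, hlR, -⟩ := hl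
      have hlen' : l.length = C := mem_allLists.1 hlen
      have hW' : f (vertMap C r roots l) ∉ W := fun hw =>
        hlR (mem_RsetD.2 ⟨le_of_eq hlen', hw⟩)
      rcases hpart1 (f (vertMap C r roots l)) with ⟨h1, h2, -⟩ | ⟨h1, h2, -⟩ | ⟨h1, -, -⟩
      · have b1 : χ₁ l = true := by rw [hχ₁]; exact chiD_eq_true.2 h1
        have b2 : χ₂ l = false := by
          rw [hχ₂]
          rw [Bool.eq_false_iff]
          intro hb
          exact h2 (chiD_eq_true.1 hb)
        rw [b1, b2]
        norm_num
      · have b1 : χ₁ l = false := by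
          rw [hχ₁, Bool.eq_false_iff]
          intro hb
          exact h2 (chiD_eq_true.1 hb)
        have b2 : χ₂ l = true := by rw [hχ₂]; exact chiD_eq_true.2 h1
        rw [b1, b2]
        norm_num
      · exact absurd h1 hW'
    have horient : (({j : Fin (3 ^ C) | ∃ a, f (Sum.inr (j, a)) ∈ W}).ncard : ℤ) + 1
        ≤ leafD C (RsetD C r roots f W) (KsetD C r roots f W) (chiD C r roots f U₂) := by
      have : leafD C (RsetD C r roots f W) (KsetD C r roots f W) (chiD C r roots f U₂)
          = - leafD C Rs Ks χ₁ := hDflip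
      rw [this, hnc]
      rw [abs_of_neg hneg] at habs
      exact habs
    have h2 := core C r hC Ts roots hconn U₂ U₁ W f hfinj hstep2 hpart2 horient
    rw [hcard]
    exact hfinish _ h2
end
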